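/- arXiv:2203.06101 — 9 statements merged into one kernel-verified Lean document; each statement's English description precedes it below -/
import Mathlib

section
/- For all integers a ≥ 1 and n ≥ 3 with gcd(a, F_n) = 1, the least positive multiplicative inverse of a modulo F_n equals (b·F_n + 1)/a, where r = n mod π(a) (π(a) the Pisano period of a), and b is the unique element of {0,...,a-1} with b·F_r ≡ -1 (mod a). -/
/-- The Pisano period of `a`: the least positive `k` such that the Fibonacci
sequence is periodic modulo `a` with period `k`. -/
noncomputable def pisano (a : ℕ) : ℕ :=
  sInf {k | 0 < k ∧ ∀ n, Nat.fib (n + k) % a = Nat.fib n % a}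

/-- The least positive multiplicative inverse of `a` modulo `m`. -/
noncomputable def invMod (a m : ℕ) : ℕ :=
  sInf {b | 0 < b ∧ a * b % m = 1 % m}

lemma fib_mod_pisano (a n : ℕ) :
    Nat.fib n % a = Nat.fib (n % pisano a) % a := by
  by_cases hne : {k | 0 < k ∧ ∀ n, Nat.fib (n + k) % a = Nat.fib n % a}.Nonempty
  · have hmem : pisano a ∈ {k | 0 < k ∧ ∀ n, Nat.fib (n + k) % a = Nat.fib n % a} :=
      Nat.sInf_mem hne
    obtain ⟨hkpos, hper⟩ := hmem
    conv_lhs => rw [← Nat.mod_add_div n (pisano a)]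
    generalize n / pisano a = q
    induction q with
    | zero => simp
    | succ q ih =>
      rw [Nat.mul_succ, ← Nat.add_assoc, hper, ih]
  · rw [pisano, Set.not_nonempty_iff_eq_empty.mp hne, Nat.sInf_empty, Nat.mod_zero]

theorem stmt0 (a n : ℕ) (ha : 1 ≤ a) (hn : 3 ≤ n)
    (h : Nat.gcd a (Nat.fib n) = 1)
    (b : ℕ) (hb : b < a)
    (hbr : (b * Nat.fib (n % pisano a) + 1) % a = 0) :
    invMod a (Nat.fib n) = (b * Nat.fib n + 1) / a := by
  set F := Nat.fib n with hF
  have hF2 : 2 ≤ F := by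
    have : Nat.fib 3 ≤ F := Nat.fib_mono hn
    simpa [show Nat.fib 3 = 2 by rfl] using this
  have hfr : Nat.fib (n % pisano a) ≡ F [MOD a] := (fib_mod_pisano a n).symm
  have hdvd : a ∣ b * F + 1 := by
    have h1 : (b * Nat.fib (n % pisano a) + 1) % a = (b * F + 1) % a :=
      Nat.ModEq.add_right 1 ((Nat.ModEq.refl b).mul hfr)
    exact Nat.dvd_of_mod_eq_zero (by omega)
  set c := (b * F + 1) / a with hc
  have hac : a * c = b * F + 1 := Nat.mul_div_cancel' hdvd
  have hcpos : 0 < c := by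
    rcases Nat.eq_zero_or_pos c with h0 | h0
    · rw [h0, Nat.mul_zero] at hac; omega
    · exact h0
  have hcmod : a * c % F = 1 % F := by
    rw [hac, Nat.add_comm, Nat.add_mul_mod_self_right]
  have hcle : c ≤ F := by
    have hmul : a * c ≤ a * F := by nlinarith
    exact Nat.le_of_mul_le_mul_left hmul (by omega)
  have hnonempty : {x | 0 < x ∧ a * x % F = 1 % F}.Nonempty := ⟨c, hcpos, hcmod⟩
  have hdmem : invMod a F ∈ {x | 0 < x ∧ a * x % F = 1 % F} := Nat.sInf_mem hnonempty
  obtain ⟨hdpos, hdmod⟩ := hdmem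
  set d := invMod a F with hd
  have hdle : d ≤ c := Nat.sInf_le ⟨hcpos, hcmod⟩
  have hmodeq : a * d ≡ a * c [MOD F] := hdmod.trans hcmod.symm
  have hcd : d ≡ c [MOD F] := (Nat.ModEq.cancel_left_of_coprime (Nat.Coprime.symm h)) hmodeq
  have hdvdcd : F ∣ c - d := (Nat.modEq_iff_dvd' hdle).mp hcd
  have hcd0 : c - d = 0 := Nat.eq_zero_of_dvd_of_lt hdvdcd (by omega)
  omega
end

section
/- Let (d_i)_{i≥1} be a sequence with values in {0,1} such that d_i·d_{i+1} = 0 for all i, and which is not ultimately equal to the periodic pattern 0,1,0,1,.... Then the sum ∑_{i=1}^∞ d_i·φ^{-i} lies in the half-open interval [0, 1). -/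
open Real goldenRatio

private lemma r_pos : (0:ℝ) < φ⁻¹ := inv_pos.2 goldenRatio_pos

private lemma r_lt_one : φ⁻¹ < (1:ℝ) := inv_lt_one_of_one_lt₀ one_lt_goldenRatio

private lemma r_id : φ⁻¹ + φ⁻¹ ^ 2 = (1:ℝ) := by
  have hφ : φ ≠ 0 := ne_of_gt goldenRatio_pos
  have h1 : φ⁻¹ * φ = 1 := inv_mul_cancel₀ hφ
  have h2 : φ⁻¹ ^ 2 * φ ^ 2 = 1 := by rw [← mul_pow, h1, one_pow]
  have h3 : φ⁻¹ ^ 2 * φ = φ⁻¹ := by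
    rw [sq, mul_assoc, h1, mul_one]
  calc φ⁻¹ + φ⁻¹ ^ 2 = φ⁻¹ ^ 2 * (φ + 1) := by rw [mul_add, h3, mul_one]
    _ = φ⁻¹ ^ 2 * φ ^ 2 := by rw [← goldenRatio_sq]
    _ = 1 := h2

private lemma r_step (n : ℕ) : φ⁻¹ ^ n = φ⁻¹ ^ (n+1) + φ⁻¹ ^ (n+2) := by
  have := r_id
  have : φ⁻¹ ^ n * (φ⁻¹ + φ⁻¹ ^ 2) = φ⁻¹ ^ n * 1 := by rw [r_id]
  calc φ⁻¹ ^ n = φ⁻¹ ^ n * (φ⁻¹ + φ⁻¹ ^ 2) := by rw [r_id]; ring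
    _ = φ⁻¹ ^ (n+1) + φ⁻¹ ^ (n+2) := by ring

/-- key finite bound -/
private lemma aux_main (d : ℕ → ℕ) (h01 : ∀ i, d i ≤ 1)
    (hnc : ∀ i, 1 ≤ i → d i * d (i + 1) = 0) :
    ∀ n, (∑ j ∈ Finset.range n, (d (j + 1) : ℝ) * φ⁻¹ ^ (j + 1)) ≤ 1 - φ⁻¹ ^ (n+1) ∧
      ((n = 0 ∨ d n = 0) →
        (∑ j ∈ Finset.range n, (d (j + 1) : ℝ) * φ⁻¹ ^ (j + 1)) ≤ 1 - φ⁻¹ ^ n) := by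
  intro n
  induction n with
  | zero =>
    constructor
    · have h := r_lt_one
      simp only [Finset.range_zero, Finset.sum_empty, zero_add, pow_one]
      linarith
    · intro _; simp
  | succ n ih =>
    have hr0 := r_pos
    have hpow : (0:ℝ) < φ⁻¹ ^ (n+2) := by positivity
    have hpow' : φ⁻¹ ^ (n+2) ≤ φ⁻¹ ^ (n+1) :=
      pow_le_pow_of_le_one (le_of_lt hr0) (le_of_lt r_lt_one) (by omega)
    rw [Finset.sum_range_succ]
    have hd := h01 (n+1)
    interval_cases h : d (n+1)
    · constructor
      · simp only [Nat.cast_zero, zero_mul, add_zero]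
        linarith [ih.1]
      · intro _
        simp only [Nat.cast_zero, zero_mul, add_zero]
        exact ih.1
    · constructor
      · rcases Nat.eq_zero_or_pos n with rfl | hn
        · simp only [Finset.range_zero, Finset.sum_empty, zero_add, Nat.cast_one, one_mul]
          have : φ⁻¹ ^ (0+1) = 1 - φ⁻¹ ^ (0+1+1) := by
            have := r_id; simp only [pow_one] at *; linarith [r_id]
          rw [this]
        · have hdn : d n = 0 := by
            have := hnc n hn
            rw [h] at this
            omega
          have h2 := ih.2 (Or.inr hdn)
          have hs := r_step n
          simp only [Nat.cast_one, one_mul]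
          linarith
      · intro hc
        rcases hc with hc | hc
        · omega
        · omega

private lemma tsum_le_one (d : ℕ → ℕ) (h01 : ∀ i, d i ≤ 1)
    (hnc : ∀ i, 1 ≤ i → d i * d (i + 1) = 0) :
    (∑' j : ℕ, (d (j + 1) : ℝ) * φ⁻¹ ^ (j + 1)) ≤ 1 := by
  apply Real.tsum_le_of_sum_range_le
  · intro n
    have := r_pos
    positivity
  · intro n
    have h := (aux_main d h01 hnc n).1
    have : (0:ℝ) < φ⁻¹ ^ (n+1) := by have := r_pos; positivity
    linarith

private lemma summable_aux (d : ℕ → ℕ) (h01 : ∀ i, d i ≤ 1) :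
    Summable (fun j : ℕ => (d (j + 1) : ℝ) * φ⁻¹ ^ (j + 1)) := by
  have hg : Summable (fun j : ℕ => φ⁻¹ ^ (j+1)) :=
    (summable_geometric_of_lt_one (le_of_lt r_pos) r_lt_one).comp_injective
      (add_left_injective 1)
  refine Summable.of_nonneg_of_le (fun n => by have := r_pos; positivity) ?_ hg
  intro j
  have h1 : (d (j+1) : ℝ) ≤ 1 := by exact_mod_cast h01 (j+1)
  have h2 : (0:ℝ) ≤ φ⁻¹ ^ (j+1) := by have := r_pos; positivity
  nlinarith

theorem stmt2 (d : ℕ → ℕ)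
    (h01 : ∀ i, d i ≤ 1)
    (hnc : ∀ i, 1 ≤ i → d i * d (i + 1) = 0)
    (hnu : ∀ k, ∃ i, k ≤ i ∧ 1 ≤ i ∧ d i = 0 ∧ d (i + 1) = 0) :
    (∑' i : ℕ, (d (i + 1) : ℝ) * φ⁻¹ ^ (i + 1)) ∈ Set.Ico (0 : ℝ) 1 := by
  have hr0 := r_pos
  have hS := summable_aux d h01
  constructor
  · exact tsum_nonneg (fun n => by positivity)
  · obtain ⟨i, hki, hi1, hdi, hdi1⟩ := hnu 1
    obtain ⟨m, rfl⟩ : ∃ m, i = m + 1 := ⟨i - 1, by omega⟩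
    set f : ℕ → ℝ := fun j => (d (j + 1) : ℝ) * φ⁻¹ ^ (j + 1) with hf
    -- split the tsum at i + 1 = m + 2
    have hsplit := Summable.sum_add_tsum_nat_add (f := f) (m + 2) hS
    -- prefix bound
    have hpre : (∑ j ∈ Finset.range (m + 2), f j) ≤ 1 - φ⁻¹ ^ (m + 1) := by
      have : (∑ j ∈ Finset.range (m + 2), f j) = ∑ j ∈ Finset.range m, f j := by
        rw [Finset.sum_range_succ, Finset.sum_range_succ]
        simp [hf, hdi, hdi1]
      rw [this]
      exact (aux_main d h01 hnc m).1
    -- tail bound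
    have htail : (∑' j : ℕ, f (j + (m + 2))) ≤ φ⁻¹ ^ (m + 2) := by
      set e : ℕ → ℕ := fun j => d (m + 2 + j) with he
      have he01 : ∀ j, e j ≤ 1 := fun j => h01 _
      have henc : ∀ j, 1 ≤ j → e j * e (j + 1) = 0 := by
        intro j hj
        show d (m + 2 + j) * d (m + 2 + (j + 1)) = 0
        rw [show m + 2 + (j + 1) = (m + 2 + j) + 1 from by ring]
        exact hnc (m + 2 + j) (by omega)
      have hb := tsum_le_one e he01 henc
      have heq : (∑' j : ℕ, f (j + (m + 2))) =
          φ⁻¹ ^ (m + 2) * ∑' j : ℕ, (e (j + 1) : ℝ) * φ⁻¹ ^ (j + 1) := by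
        rw [← tsum_mul_left]
        congr 1
        funext j
        have h1 : e (j + 1) = d (j + (m + 2) + 1) := congrArg d (by omega)
        simp only [hf, h1]
        rw [show j + (m + 2) + 1 = (m + 2) + (j + 1) by ring, pow_add]
        ring
      rw [heq]
      have hp : (0:ℝ) ≤ φ⁻¹ ^ (m + 2) := by positivity
      calc φ⁻¹ ^ (m + 2) * ∑' j : ℕ, (e (j + 1) : ℝ) * φ⁻¹ ^ (j + 1)
          ≤ φ⁻¹ ^ (m + 2) * 1 := by
            apply mul_le_mul_of_nonneg_left hb hp
        _ = φ⁻¹ ^ (m + 2) := mul_one _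
    have hstep := r_step (m + 1)
    have hpow3 : (0:ℝ) < φ⁻¹ ^ (m + 3) := by positivity
    have : (∑' j : ℕ, f j) ≤ 1 - φ⁻¹ ^ (m + 3) := by
      rw [← hsplit]
      have : (m + 1) + 2 = m + 3 := by ring
      rw [this] at hstep
      linarith
    linarith
end

section
/- Let (d_i)_{i≥1} be a sequence with values in {0,1} such that d_i·d_{i+1} = 0 for all i, and which is not ultimately equal to the periodic pattern 0,1,0,1,.... Then for every m ∈ ℕ ∪ {∞}, the sum ∑_{i=1}^m d_i·(-φ)^{-i} lies strictly between -1 and φ^{-1}. -/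
open Real goldenRatio

namespace Stmt3Aux

open Finset

noncomputable def upT (q : ℝ) (i : ℕ) : ℝ := if Even (i + 1) then q ^ (i + 1) else 0
noncomputable def loT (q : ℝ) (i : ℕ) : ℝ := if Even (i + 1) then 0 else -q ^ (i + 1)

variable {q : ℝ}

lemma up_sum_even (hq2 : q ^ 2 = 1 - q) :
    ∀ k, ∑ i ∈ range (2 * k), upT q i = q * (1 - q ^ (2 * k)) := by
  intro k
  induction k with
  | zero => simp
  | succ k ih =>
    have h1 : 2 * (k + 1) = (2 * k + 1) + 1 := by ring
    rw [h1, Finset.sum_range_succ, Finset.sum_range_succ, ih]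
    have h2 : ¬ Even (2 * k + 1) := by simp [Nat.even_add_one]
    have h3 : Even (2 * k + 1 + 1) := by simp [Nat.even_add_one, h2]
    rw [upT, upT, if_neg h2, if_pos h3]
    linear_combination (q ^ (2 * k) * q) * hq2

lemma up_sum (hq2 : q ^ 2 = 1 - q) (m : ℕ) :
    ∑ i ∈ range m, upT q i = q * (1 - q ^ (2 * (m / 2))) := by
  rcases Nat.even_or_odd m with ⟨k, hk⟩ | ⟨k, hk⟩
  · have : m = 2 * k := by omega
    subst this
    have hk2 : 2 * k / 2 = k := by omega
    rw [up_sum_even hq2 k, hk2]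
  · have : m = 2 * k + 1 := by omega
    subst this
    rw [Finset.sum_range_succ, up_sum_even hq2 k]
    have h2 : ¬ Even (2 * k + 1) := by simp [Nat.even_add_one]
    rw [upT, if_neg h2]
    have : (2 * k + 1) / 2 = k := by omega
    rw [this]
    ring

lemma lo_sum_even (hq2 : q ^ 2 = 1 - q) :
    ∀ k, ∑ i ∈ range (2 * k), loT q i = q ^ (2 * k) - 1 := by
  intro k
  induction k with
  | zero => simp
  | succ k ih =>
    have h1 : 2 * (k + 1) = (2 * k + 1) + 1 := by ring
    rw [h1, Finset.sum_range_succ, Finset.sum_range_succ, ih]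
    have h2 : ¬ Even (2 * k + 1) := by simp [Nat.even_add_one]
    have h3 : Even (2 * k + 1 + 1) := by simp [Nat.even_add_one, h2]
    rw [loT, loT, if_neg h2, if_pos h3]
    linear_combination (-q ^ (2 * k)) * hq2

lemma lo_sum (hq2 : q ^ 2 = 1 - q) (m : ℕ) :
    ∑ i ∈ range m, loT q i = q ^ (2 * ((m + 1) / 2)) - 1 := by
  rcases Nat.even_or_odd m with ⟨k, hk⟩ | ⟨k, hk⟩
  · have : m = 2 * k := by omega
    subst this
    have hk2 : (2 * k + 1) / 2 = k := by omega
    rw [lo_sum_even hq2 k, hk2]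
  · have : m = 2 * k + 1 := by omega
    subst this
    rw [Finset.sum_range_succ, lo_sum_even hq2 k]
    have h2 : ¬ Even (2 * k + 1) := by simp [Nat.even_add_one]
    rw [loT, if_neg h2]
    have e0 : (2 * k + 1 + 1) / 2 = k + 1 := by omega
    rw [e0]
    linear_combination (-q ^ (2 * k)) * hq2

lemma up_le (hq0 : 0 < q) (hq2 : q ^ 2 = 1 - q) (m : ℕ) :
    ∑ i ∈ range m, upT q i ≤ q := by
  rw [up_sum hq2 m]
  nlinarith [pow_pos hq0 (2 * (m / 2))]

lemma up_lt (hq0 : 0 < q) (hq2 : q ^ 2 = 1 - q) (m : ℕ) :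
    ∑ i ∈ range m, upT q i < q := by
  rw [up_sum hq2 m]
  nlinarith [pow_pos hq0 (2 * (m / 2))]

lemma lo_ge (hq0 : 0 < q) (hq2 : q ^ 2 = 1 - q) (m : ℕ) :
    (-1 : ℝ) ≤ ∑ i ∈ range m, loT q i := by
  rw [lo_sum hq2 m]
  nlinarith [pow_pos hq0 (2 * ((m + 1) / 2))]

lemma lo_gt (hq0 : 0 < q) (hq2 : q ^ 2 = 1 - q) (m : ℕ) :
    (-1 : ℝ) < ∑ i ∈ range m, loT q i := by
  rw [lo_sum hq2 m]
  nlinarith [pow_pos hq0 (2 * ((m + 1) / 2))]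

-- termwise bounds
lemma term_le_up (hq0 : 0 < q) {d : ℕ → ℕ} (h01 : ∀ i, d i ≤ 1) (i : ℕ) :
    (d (i + 1) : ℝ) * (-q) ^ (i + 1) ≤ upT q i := by
  have hd0 : (0 : ℝ) ≤ (d (i + 1) : ℝ) := Nat.cast_nonneg _
  have hd1 : (d (i + 1) : ℝ) ≤ 1 := by exact_mod_cast h01 (i + 1)
  rcases Nat.even_or_odd (i + 1) with he | ho
  · rw [upT, if_pos he, he.neg_pow]
    have hp : (0 : ℝ) ≤ q ^ (i + 1) := (pow_pos hq0 _).le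
    nlinarith
  · rw [upT, if_neg (Nat.not_even_iff_odd.mpr ho), ho.neg_pow]
    have hp : (0 : ℝ) ≤ q ^ (i + 1) := (pow_pos hq0 _).le
    nlinarith

lemma lo_le_term (hq0 : 0 < q) {d : ℕ → ℕ} (h01 : ∀ i, d i ≤ 1) (i : ℕ) :
    loT q i ≤ (d (i + 1) : ℝ) * (-q) ^ (i + 1) := by
  have hd0 : (0 : ℝ) ≤ (d (i + 1) : ℝ) := Nat.cast_nonneg _
  have hd1 : (d (i + 1) : ℝ) ≤ 1 := by exact_mod_cast h01 (i + 1)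
  rcases Nat.even_or_odd (i + 1) with he | ho
  · rw [loT, if_pos he, he.neg_pow]
    have hp : (0 : ℝ) ≤ q ^ (i + 1) := (pow_pos hq0 _).le
    nlinarith
  · rw [loT, if_neg (Nat.not_even_iff_odd.mpr ho), ho.neg_pow]
    have hp : (0 : ℝ) ≤ q ^ (i + 1) := (pow_pos hq0 _).le
    nlinarith

lemma S_le_up (hq0 : 0 < q) {d : ℕ → ℕ} (h01 : ∀ i, d i ≤ 1) (m : ℕ) :
    ∑ i ∈ range m, (d (i + 1) : ℝ) * (-q) ^ (i + 1) ≤ ∑ i ∈ range m, upT q i :=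
  Finset.sum_le_sum fun i _ => term_le_up hq0 h01 i

lemma lo_le_S (hq0 : 0 < q) {d : ℕ → ℕ} (h01 : ∀ i, d i ≤ 1) (m : ℕ) :
    ∑ i ∈ range m, loT q i ≤ ∑ i ∈ range m, (d (i + 1) : ℝ) * (-q) ^ (i + 1) :=
  Finset.sum_le_sum fun i _ => lo_le_term hq0 h01 i

-- hole versions
lemma S_le_up_hole (hq0 : 0 < q) {d : ℕ → ℕ} (h01 : ∀ i, d i ≤ 1)
    {j m : ℕ} (hj : 1 ≤ j) (hdj : d j = 0) (hm : j ≤ m) :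
    ∑ i ∈ range m, (d (i + 1) : ℝ) * (-q) ^ (i + 1)
      ≤ (∑ i ∈ range m, upT q i) - upT q (j - 1) := by
  have hmem : j - 1 ∈ range m := by
    rw [Finset.mem_range]; omega
  have hjj : (j - 1) + 1 = j := by omega
  have hterm : (d ((j - 1) + 1) : ℝ) * (-q) ^ ((j - 1) + 1) = 0 := by
    rw [hjj, hdj]; simp
  calc ∑ i ∈ range m, (d (i + 1) : ℝ) * (-q) ^ (i + 1)
      = ∑ i ∈ (range m).erase (j - 1), (d (i + 1) : ℝ) * (-q) ^ (i + 1) := by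
        rw [Finset.sum_erase_eq_sub hmem, hterm, sub_zero]
    _ ≤ ∑ i ∈ (range m).erase (j - 1), upT q i :=
        Finset.sum_le_sum fun i _ => term_le_up hq0 h01 i
    _ = (∑ i ∈ range m, upT q i) - upT q (j - 1) := Finset.sum_erase_eq_sub hmem

lemma lo_le_S_hole (hq0 : 0 < q) {d : ℕ → ℕ} (h01 : ∀ i, d i ≤ 1)
    {j m : ℕ} (hj : 1 ≤ j) (hdj : d j = 0) (hm : j ≤ m) :
    (∑ i ∈ range m, loT q i) - loT q (j - 1)
      ≤ ∑ i ∈ range m, (d (i + 1) : ℝ) * (-q) ^ (i + 1) := by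
  have hmem : j - 1 ∈ range m := by
    rw [Finset.mem_range]; omega
  have hjj : (j - 1) + 1 = j := by omega
  have hterm : (d ((j - 1) + 1) : ℝ) * (-q) ^ ((j - 1) + 1) = 0 := by
    rw [hjj, hdj]; simp
  calc (∑ i ∈ range m, loT q i) - loT q (j - 1)
      = ∑ i ∈ (range m).erase (j - 1), loT q i := (Finset.sum_erase_eq_sub hmem).symm
    _ ≤ ∑ i ∈ (range m).erase (j - 1), (d (i + 1) : ℝ) * (-q) ^ (i + 1) :=
        Finset.sum_le_sum fun i _ => lo_le_term hq0 h01 i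
    _ = ∑ i ∈ range m, (d (i + 1) : ℝ) * (-q) ^ (i + 1) := by
        rw [Finset.sum_erase_eq_sub hmem, hterm, sub_zero]

end Stmt3Aux

open Stmt3Aux Finset Filter

theorem stmt3 (d : ℕ → ℕ)
    (h01 : ∀ i, d i ≤ 1)
    (hnc : ∀ i, 1 ≤ i → d i * d (i + 1) = 0)
    (hnu : ∀ k, ∃ i, k ≤ i ∧ 1 ≤ i ∧ d i = 0 ∧ d (i + 1) = 0) :
    (∀ m : ℕ,
      (∑ i ∈ Finset.range m, (d (i + 1) : ℝ) * (-φ)⁻¹ ^ (i + 1)) ∈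
        Set.Ioo (-1 : ℝ) φ⁻¹) ∧
    (∑' i : ℕ, (d (i + 1) : ℝ) * (-φ)⁻¹ ^ (i + 1)) ∈ Set.Ioo (-1 : ℝ) φ⁻¹ := by
  set q : ℝ := φ⁻¹ with hqdef
  have hφ : (0 : ℝ) < φ := goldenRatio_pos
  have hq0 : 0 < q := inv_pos.mpr hφ
  have hq1 : q < 1 := inv_lt_one_of_one_lt₀ one_lt_goldenRatio
  have hq2 : q ^ 2 = 1 - q := by
    have hne : (φ : ℝ) ≠ 0 := ne_of_gt hφ
    have e : q ^ 2 * φ ^ 2 = 1 := by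
      rw [hqdef, ← mul_pow, inv_mul_cancel₀ hne, one_pow]
    have e2 : (1 - q) * φ ^ 2 = 1 := by
      have h : q * φ = 1 := by rw [hqdef]; exact inv_mul_cancel₀ hne
      linear_combination goldenRatio_sq - φ * h
    exact mul_right_cancel₀ (pow_ne_zero 2 hne) (e.trans e2.symm)
  have hneg : (-φ)⁻¹ = -q := by rw [inv_neg, hqdef]
  -- the summand function
  set f : ℕ → ℝ := fun i => (d (i + 1) : ℝ) * (-q) ^ (i + 1) with hfdef
  have hfeq : ∀ i, (d (i + 1) : ℝ) * (-φ)⁻¹ ^ (i + 1) = f i := by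
    intro i; rw [hneg]
  -- summability
  have hsum : Summable f := by
    apply Summable.of_norm_bounded (g := fun i => q ^ i * q)
    · exact (summable_geometric_of_lt_one hq0.le hq1).mul_right q
    · intro i
      have hd1 : (d (i + 1) : ℝ) ≤ 1 := by exact_mod_cast h01 (i + 1)
      have hd0 : (0 : ℝ) ≤ (d (i + 1) : ℝ) := Nat.cast_nonneg _
      have : ‖f i‖ = (d (i + 1) : ℝ) * q ^ (i + 1) := by
        rw [hfdef]
        rw [norm_mul, norm_pow, norm_neg, Real.norm_eq_abs, Real.norm_eq_abs,
          abs_of_nonneg hd0, abs_of_nonneg hq0.le]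
      rw [this, ← pow_succ]
      have hp : (0 : ℝ) ≤ q ^ (i + 1) := (pow_pos hq0 _).le
      nlinarith
  -- parity-split zeros
  obtain ⟨i0, -, hi1, hd0, hd1⟩ := hnu 1
  obtain ⟨je, hje1, hjee, hdje⟩ : ∃ j, 1 ≤ j ∧ Even j ∧ d j = 0 := by
    rcases Nat.even_or_odd i0 with he | ho
    · exact ⟨i0, hi1, he, hd0⟩
    · exact ⟨i0 + 1, by omega, by simpa [Nat.even_add_one] using Nat.not_even_iff_odd.mpr ho, hd1⟩
  obtain ⟨jo, hjo1, hjoo, hdjo⟩ : ∃ j, 1 ≤ j ∧ ¬ Even j ∧ d j = 0 := by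
    rcases Nat.even_or_odd i0 with he | ho
    · exact ⟨i0 + 1, by omega, by simp [Nat.even_add_one, he], hd1⟩
    · exact ⟨i0, hi1, Nat.not_even_iff_odd.mpr ho, hd0⟩
  have hupje : upT q (je - 1) = q ^ je := by
    rw [upT]
    have : je - 1 + 1 = je := by omega
    rw [this, if_pos hjee]
  have hlojo : loT q (jo - 1) = -q ^ jo := by
    rw [loT]
    have : jo - 1 + 1 = jo := by omega
    rw [this, if_neg hjoo]
  constructor
  · -- finite part
    intro m
    simp only [hfeq]
    constructor
    · calc (-1 : ℝ) < ∑ i ∈ range m, loT q i := lo_gt hq0 hq2 m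
        _ ≤ ∑ i ∈ range m, f i := lo_le_S hq0 h01 m
    · calc ∑ i ∈ range m, f i ≤ ∑ i ∈ range m, upT q i := S_le_up hq0 h01 m
        _ < q := up_lt hq0 hq2 m
  · -- infinite part
    have hts : (∑' i : ℕ, (d (i + 1) : ℝ) * (-φ)⁻¹ ^ (i + 1)) = ∑' i, f i := by
      exact tsum_congr hfeq
    rw [hts]
    have htend : Tendsto (fun m => ∑ i ∈ range m, f i) atTop (nhds (∑' i, f i)) :=
      hsum.hasSum.tendsto_sum_nat
    constructor
    · have hle : -1 + q ^ jo ≤ ∑' i, f i := by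
        apply ge_of_tendsto htend
        filter_upwards [eventually_ge_atTop jo] with m hm
        calc (-1 : ℝ) + q ^ jo ≤ (∑ i ∈ range m, loT q i) + q ^ jo := by
              linarith [lo_ge hq0 hq2 m]
          _ = (∑ i ∈ range m, loT q i) - loT q (jo - 1) := by rw [hlojo]; ring
          _ ≤ ∑ i ∈ range m, f i := lo_le_S_hole hq0 h01 hjo1 hdjo hm
      have : (0 : ℝ) < q ^ jo := pow_pos hq0 _
      linarith
    · have hle : (∑' i, f i) ≤ q - q ^ je := by
        apply le_of_tendsto htend
        filter_upwards [eventually_ge_atTop je] with m hm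
        calc ∑ i ∈ range m, f i
            ≤ (∑ i ∈ range m, upT q i) - upT q (je - 1) :=
              S_le_up_hole hq0 h01 hje1 hdje hm
          _ = (∑ i ∈ range m, upT q i) - q ^ je := by rw [hupje]
          _ ≤ q - q ^ je := by linarith [up_le hq0 hq2 m]
      have : (0 : ℝ) < q ^ je := pow_pos hq0 _
      linarith
end

section
/- Under the hypotheses of the previous statement (N = x·φ^m/√5 a positive integer, m ≥ 2, δ_i the base-φ digits of x), the quantity √5·(N − ∑_{i=1}^{m-1} δ_{m-i}·F_i) equals ∑_{i=0}^{m-1} δ_{m-i}·(-φ)^{-i} + ∑_{i=1}^∞ δ_{i+m}·φ^{-i}. -/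
open Real goldenRatio

lemma aux_summable (d : ℕ → ℕ) (h01 : ∀ i, d i ≤ 1) (k : ℕ) :
    Summable (fun i : ℕ => (d (i + k) : ℝ) * φ⁻¹ ^ (i + 1)) := by
  have hφ : (0:ℝ) < φ⁻¹ := by positivity
  have hlt : φ⁻¹ < 1 := by
    rw [inv_lt_one_iff₀]; right; exact one_lt_goldenRatio
  have hg : Summable (fun i : ℕ => φ⁻¹ * φ⁻¹ ^ i) :=
    (summable_geometric_of_lt_one hφ.le hlt).mul_left _
  refine Summable.of_nonneg_of_le (fun i => by positivity) (fun i => ?_) hg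
  rw [pow_succ']
  have h1 : (d (i + k) : ℝ) ≤ 1 := by exact_mod_cast h01 (i + k)
  exact mul_le_of_le_one_left (by positivity) h1

theorem stmt6 (N : ℕ) (hN : 0 < N) (m : ℕ) (hm : 2 ≤ m)
    (x : ℝ) (hx : x ∈ Set.Ico (0 : ℝ) 1)
    (d : ℕ → ℕ)
    (h01 : ∀ i, d i ≤ 1)
    (hnc : ∀ i, 1 ≤ i → d i * d (i + 1) = 0)
    (hnu : ∀ k, ∃ i, k ≤ i ∧ 1 ≤ i ∧ d i = 0 ∧ d (i + 1) = 0)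
    (hexp : x = ∑' i : ℕ, (d (i + 1) : ℝ) * φ⁻¹ ^ (i + 1))
    (hNx : (N : ℝ) = x * φ ^ m / Real.sqrt 5) :
    Real.sqrt 5 *
        ((N : ℝ) - ∑ i ∈ Finset.Icc 1 (m - 1), (d (m - i) : ℝ) * Nat.fib i) =
      (∑ i ∈ Finset.range m, (d (m - i) : ℝ) * (-φ)⁻¹ ^ i) +
        ∑' i : ℕ, (d (i + 1 + m) : ℝ) * φ⁻¹ ^ (i + 1) := by
  have h5 : (0:ℝ) < Real.sqrt 5 := Real.sqrt_pos.2 (by norm_num)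
  have hφ : (0:ℝ) < φ := goldenRatio_pos
  have hψ : ψ = (-φ)⁻¹ := by rw [← inv_goldenConj, inv_inv]
  set S : ℝ := ∑' i : ℕ, (d (i + 1 + m) : ℝ) * φ⁻¹ ^ (i + 1) with hS
  -- step 1 : √5 * N = x * φ^m
  have h1 : Real.sqrt 5 * (N : ℝ) = x * φ ^ m := by
    rw [hNx]; field_simp
  -- split tsum
  have hsum1 := aux_summable d h01 1
  have hsplit := Summable.sum_add_tsum_nat_add m hsum1
  -- x = finite + tail'
  have hx2 : x = (∑ i ∈ Finset.range m, (d (i + 1) : ℝ) * φ⁻¹ ^ (i + 1))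
      + ∑' i : ℕ, (d (i + m + 1) : ℝ) * φ⁻¹ ^ (i + m + 1) := by
    rw [hexp, ← hsplit]
  have hx3 : x * φ ^ m
      = (∑ i ∈ Finset.range m, (d (i + 1) : ℝ) * φ⁻¹ ^ (i + 1) * φ ^ m) + S := by
    rw [hx2, add_mul, Finset.sum_mul]
    congr 1
    rw [← tsum_mul_right]
    apply tsum_congr
    intro i
    rw [show i + m + 1 = i + 1 + m from by omega, mul_assoc,
      show φ⁻¹ ^ (i + 1 + m) * φ ^ m = φ⁻¹ ^ (i + 1) from by
        rw [pow_add, mul_assoc, inv_pow φ m, inv_mul_cancel₀ (pow_ne_zero m goldenRatio_ne_zero),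
          mul_one]]
  -- finite part simplification
  have hfin : (∑ i ∈ Finset.range m, (d (i + 1) : ℝ) * φ⁻¹ ^ (i + 1) * φ ^ m)
      = ∑ j ∈ Finset.range m, (d (m - j) : ℝ) * φ ^ j := by
    rw [← Finset.sum_range_reflect (fun j => (d (m - j) : ℝ) * φ ^ j) m]
    apply Finset.sum_congr rfl
    intro i hi
    rw [Finset.mem_range] at hi
    have h1 : m - (m - 1 - i) = i + 1 := by omega
    rw [h1]
    have h2 : φ ^ m = φ ^ (m - 1 - i) * φ ^ (i + 1) := by
      rw [← pow_add]; congr 1; omega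
    rw [h2, inv_pow]
    field_simp
  -- √5 * N = d m + A + S
  have hA : Real.sqrt 5 * (N : ℝ)
      = (d m : ℝ) + (∑ i ∈ Finset.Icc 1 (m - 1), (d (m - i) : ℝ) * φ ^ i) + S := by
    rw [h1, hx3, hfin]
    congr 1
    have hIcc : Finset.Icc 1 (m - 1) = Finset.Ico 1 m := by
      rw [← Finset.Ico_add_one_right_eq_Icc]
      congr 1
      omega
    rw [hIcc, Finset.range_eq_Ico,
      Finset.sum_eq_sum_Ico_succ_bot (by omega : 0 < m) (fun j => (d (m - j) : ℝ) * φ ^ j)]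
    simp
  -- fib part
  have hF : Real.sqrt 5 * (∑ i ∈ Finset.Icc 1 (m - 1), (d (m - i) : ℝ) * Nat.fib i)
      = (∑ i ∈ Finset.Icc 1 (m - 1), (d (m - i) : ℝ) * φ ^ i)
        - (∑ i ∈ Finset.Icc 1 (m - 1), (d (m - i) : ℝ) * ψ ^ i) := by
    rw [Finset.mul_sum, ← Finset.sum_sub_distrib]
    apply Finset.sum_congr rfl
    intro i _
    rw [Real.coe_fib_eq]
    field_simp
  -- RHS range split
  have hR : (∑ i ∈ Finset.range m, (d (m - i) : ℝ) * (-φ)⁻¹ ^ i)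
      = (d m : ℝ) + ∑ i ∈ Finset.Icc 1 (m - 1), (d (m - i) : ℝ) * ψ ^ i := by
    have hIcc : Finset.Icc 1 (m - 1) = Finset.Ico 1 m := by
      rw [← Finset.Ico_add_one_right_eq_Icc]; congr 1; omega
    rw [hIcc, Finset.range_eq_Ico,
      Finset.sum_eq_sum_Ico_succ_bot (by omega : 0 < m) (fun j => (d (m - j) : ℝ) * (-φ)⁻¹ ^ j)]
    simp [hψ]
  rw [mul_sub, hA, hF, hR]
  ring
end

section
/- If x is a rational number in [0,1), then its base-φ digit sequence (δ_i(x))_{i≥1} is purely periodic. -/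
open Real goldenRatio

/-- The map `T x = φ x mod 1` of the base-`φ` expansion. -/
noncomputable def phiMap (y : ℝ) : ℝ := Int.fract (goldenRatio * y)

/-- The `i`-th digit (for `i ≥ 1`) of the base-`φ` expansion of `x ∈ [0,1)`. -/
noncomputable def phiDigit (x : ℝ) (i : ℕ) : ℤ :=
  ⌊goldenRatio * (phiMap^[i - 1] x)⌋

noncomputable def phiPair (q : ℚ) : ℕ → ℚ × ℚ
  | 0 => (q, 0)
  | k + 1 =>
    ((phiPair q k).2 -
        (⌊φ * (((phiPair q k).1 : ℝ) + ((phiPair q k).2 : ℝ) * φ)⌋ : ℤ),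
      (phiPair q k).1 + (phiPair q k).2)

noncomputable def pemb (p : ℚ × ℚ) : ℝ := (p.1 : ℝ) + (p.2 : ℝ) * φ
noncomputable def pconj (p : ℚ × ℚ) : ℝ := (p.1 : ℝ) + (p.2 : ℝ) * ψ

lemma pemb_phiPair (q : ℚ) : ∀ k, pemb (phiPair q k) = phiMap^[k] (q : ℝ)
  | 0 => by simp [phiPair, pemb]
  | k + 1 => by
    rw [Function.iterate_succ_apply', ← pemb_phiPair q k]
    show pemb _ = Int.fract (φ * pemb (phiPair q k))
    rw [Int.fract]
    show pemb ((phiPair q k).2 - (((⌊φ * (((phiPair q k).1 : ℝ) + ((phiPair q k).2:ℝ) * φ)⌋ : ℤ) : ℚ)),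
      (phiPair q k).1 + (phiPair q k).2) = _
    unfold pemb
    push_cast
    linear_combination ((phiPair q k).2 : ℝ) * goldenRatio_sq - ((phiPair q k).2 : ℝ)/2 * Real.sq_sqrt (by norm_num : (0:ℝ) ≤ 5)

lemma pconj_phiPair_succ (q : ℚ) (k : ℕ) :
    pconj (phiPair q (k + 1)) =
      ψ * pconj (phiPair q k) - (⌊φ * pemb (phiPair q k)⌋ : ℤ) := by
  show pconj ((phiPair q k).2 - (((⌊φ * (((phiPair q k).1 : ℝ) + ((phiPair q k).2:ℝ) * φ)⌋ : ℤ) : ℚ)),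
      (phiPair q k).1 + (phiPair q k).2) = _
  unfold pconj pemb
  push_cast
  linear_combination ((phiPair q k).2 : ℝ) * goldenConj_sq - ((phiPair q k).2 : ℝ)/2 * Real.sq_sqrt (by norm_num : (0:ℝ) ≤ 5)

lemma digit_cases {y : ℝ} (h0 : 0 ≤ y) (h1 : y < 1) : ⌊φ * y⌋ = 0 ∨ ⌊φ * y⌋ = 1 := by
  have h2 : (0:ℝ) ≤ φ * y := mul_nonneg goldenRatio_pos.le h0
  have h3 : φ * y < 2 := by nlinarith [goldenRatio_lt_two, goldenRatio_pos]
  have h4 : 0 ≤ ⌊φ * y⌋ := Int.floor_nonneg.mpr h2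
  have h5 : ⌊φ * y⌋ < 2 := Int.floor_lt.mpr (by exact_mod_cast h3)
  omega

lemma phiInv (q : ℚ) (h0 : 0 ≤ (q:ℝ)) (h1 : (q:ℝ) < 1) :
    ∀ k, (0 ≤ pemb (phiPair q k) ∧ pemb (phiPair q k) < 1) ∧
      (-φ < pconj (phiPair q k) ∧ pconj (phiPair q k) < 1) ∧
      (1 ≤ φ * pemb (phiPair q k) → ψ < pconj (phiPair q k)) := by
  intro k
  induction k with
  | zero =>
    have he : pemb (phiPair q 0) = (q:ℝ) := by simp [phiPair, pemb]
    have hc : pconj (phiPair q 0) = (q:ℝ) := by simp [phiPair, pconj]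
    rw [he, hc]
    refine ⟨⟨h0, h1⟩, ⟨by linarith [goldenRatio_pos], h1⟩, fun _ => by linarith [goldenConj_neg]⟩
  | succ k ih =>
    obtain ⟨⟨hy0, hy1⟩, ⟨hc0, hc1⟩, hex⟩ := ih
    set y := pemb (phiPair q k) with hydef
    set c := pconj (phiPair q k) with hcdef
    have he : pemb (phiPair q (k+1)) = φ * y - (⌊φ * y⌋ : ℤ) := by
      rw [pemb_phiPair, Function.iterate_succ_apply', ← pemb_phiPair]
      show Int.fract (φ * y) = _
      rw [Int.fract]
    have hc : pconj (phiPair q (k+1)) = ψ * c - (⌊φ * y⌋ : ℤ) := pconj_phiPair_succ q k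
    have hψ0 : (0:ℝ) < -ψ := neg_pos.mpr goldenConj_neg
    have hmul : φ * ψ = -1 := goldenRatio_mul_goldenConj
    have hadd : φ + ψ = 1 := goldenRatio_add_goldenConj
    have hsq : ψ ^ 2 = ψ + 1 := goldenConj_sq
    have hP1 : 0 < -ψ * (1 - c) := mul_pos hψ0 (by linarith)
    have hP2 : 0 < -ψ * (c + φ) := mul_pos hψ0 (by linarith)
    -- range of the new point
    have hy0' : 0 ≤ pemb (phiPair q (k+1)) := by
      rw [he]; exact sub_nonneg.mpr (Int.floor_le _)
    have hy1' : pemb (phiPair q (k+1)) < 1 := by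
      rw [he]; linarith [Int.lt_floor_add_one (φ * y)]
    refine ⟨⟨hy0', hy1'⟩, ?_⟩
    rcases digit_cases hy0 hy1 with hn | hn
    · have hlt : φ * y < 1 := by
        have := Int.lt_floor_add_one (φ * y); rw [hn] at this; push_cast at this; linarith
      rw [hc, hn]
      push_cast
      constructor
      · constructor
        · nlinarith [neg_one_lt_goldenConj, one_lt_goldenRatio]
        · nlinarith
      · intro _
        nlinarith
    · have hge : 1 ≤ φ * y := by
        have := Int.floor_le (φ * y); rw [hn] at this; push_cast at this; linarith
      have hcx : ψ < c := hex hge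
      have hP3 : 0 < -ψ * (c - ψ) := mul_pos hψ0 (by linarith)
      rw [hc, hn]
      push_cast
      constructor
      · constructor
        · nlinarith
        · nlinarith [neg_one_lt_goldenConj]
      · intro habs
        exfalso
        rw [he, hn] at habs
        push_cast at habs
        nlinarith [goldenRatio_sq, one_lt_goldenRatio, mul_pos (show (0:ℝ) < φ + 1 by linarith [goldenRatio_pos]) (show (0:ℝ) < 1 - y by linarith)]

lemma phiPair_succ_eq (q : ℚ) (k : ℕ) :
    phiPair q (k + 1) =
      ((phiPair q k).2 - ((⌊φ * pemb (phiPair q k)⌋ : ℤ) : ℚ),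
        (phiPair q k).1 + (phiPair q k).2) := rfl

lemma phiPair_back (q : ℚ) (h0 : 0 ≤ (q:ℝ)) (h1 : (q:ℝ) < 1) {k l : ℕ}
    (h : phiPair q (k + 1) = phiPair q (l + 1)) : phiPair q k = phiPair q l := by
  obtain ⟨⟨hyk0, hyk1⟩, ⟨hck0, hck1⟩, hexk⟩ := phiInv q h0 h1 k
  obtain ⟨⟨hyl0, hyl1⟩, ⟨hcl0, hcl1⟩, hexl⟩ := phiInv q h0 h1 l
  have hψ0 : (0:ℝ) < -ψ := neg_pos.mpr goldenConj_neg
  have hsq : ψ ^ 2 = ψ + 1 := goldenConj_sq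
  have hcc : pconj (phiPair q (k+1)) = pconj (phiPair q (l+1)) := by rw [h]
  rw [pconj_phiPair_succ, pconj_phiPair_succ] at hcc
  rw [phiPair_succ_eq, phiPair_succ_eq, Prod.mk.injEq] at h
  obtain ⟨ha, hb⟩ := h
  rcases digit_cases hyk0 hyk1 with hk | hk <;>
    rcases digit_cases hyl0 hyl1 with hl | hl
  · rw [hk, hl] at ha
    have h2 : (phiPair q k).2 = (phiPair q l).2 := by push_cast at ha; linarith
    exact Prod.ext (by linarith) h2
  · exfalso
    have hge : 1 ≤ φ * pemb (phiPair q l) := by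
      have := Int.floor_le (φ * pemb (phiPair q l)); rw [hl] at this
      push_cast at this; linarith
    have hcψ : ψ < pconj (phiPair q l) := hexl hge
    rw [hk, hl] at hcc; push_cast at hcc
    nlinarith [mul_pos hψ0 (show (0:ℝ) < pconj (phiPair q l) - ψ by linarith),
      mul_pos hψ0 (show (0:ℝ) < 1 - pconj (phiPair q k) by linarith)]
  · exfalso
    have hge : 1 ≤ φ * pemb (phiPair q k) := by
      have := Int.floor_le (φ * pemb (phiPair q k)); rw [hk] at this
      push_cast at this; linarith
    have hcψ : ψ < pconj (phiPair q k) := hexk hge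
    rw [hk, hl] at hcc; push_cast at hcc
    nlinarith [mul_pos hψ0 (show (0:ℝ) < pconj (phiPair q k) - ψ by linarith),
      mul_pos hψ0 (show (0:ℝ) < 1 - pconj (phiPair q l) by linarith)]
  · rw [hk, hl] at ha
    have h2 : (phiPair q k).2 = (phiPair q l).2 := by push_cast at ha; linarith
    exact Prod.ext (by linarith) h2

lemma phiPair_den (q : ℚ) : ∀ k, ∃ m n : ℤ,
    (phiPair q k).1 = (m : ℚ) / (q.den : ℚ) ∧ (phiPair q k).2 = (n : ℚ) / (q.den : ℚ)
  | 0 => ⟨q.num, 0, by simp [phiPair, Rat.num_div_den], by simp [phiPair]⟩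
  | k + 1 => by
    obtain ⟨m, n, hm, hn⟩ := phiPair_den q k
    have hD : (q.den : ℚ) ≠ 0 := Nat.cast_ne_zero.mpr q.den_nz
    refine ⟨n - ⌊φ * pemb (phiPair q k)⌋ * q.den, m + n, ?_, ?_⟩
    · rw [phiPair_succ_eq]; push_cast; rw [hn]; field_simp
    · rw [phiPair_succ_eq]; push_cast; rw [hm, hn]; field_simp

lemma phiPair_bounds (q : ℚ) (h0 : 0 ≤ (q:ℝ)) (h1 : (q:ℝ) < 1) (k : ℕ) :
    |((phiPair q k).1 : ℝ)| < 4 ∧ |((phiPair q k).2 : ℝ)| < 2 := by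
  obtain ⟨⟨hy0, hy1⟩, ⟨hc0, hc1⟩, -⟩ := phiInv q h0 h1 k
  set a := ((phiPair q k).1 : ℝ)
  set b := ((phiPair q k).2 : ℝ)
  have he : pemb (phiPair q k) = a + b * φ := rfl
  have hc : pconj (phiPair q k) = a + b * ψ := rfl
  rw [he] at hy0 hy1; rw [hc] at hc0 hc1
  have hadd : φ + ψ = 1 := goldenRatio_add_goldenConj
  have hφ1 : 1 < φ := one_lt_goldenRatio
  have hφ2 : φ < 2 := goldenRatio_lt_two
  have hsq : φ ^ 2 = φ + 1 := goldenRatio_sq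
  have hb1 : -1 < b := by nlinarith
  have hb2 : b < 2 := by nlinarith
  constructor
  · rw [abs_lt]; constructor <;> nlinarith
  · rw [abs_lt]; exact ⟨by linarith, hb2⟩

lemma phiPair_not_injective (q : ℚ) (h0 : 0 ≤ (q:ℝ)) (h1 : (q:ℝ) < 1) :
    ¬ Function.Injective (phiPair q) := by
  intro hinj
  set C : ℤ := 4 * q.den with hC
  have hfin : (Set.range (phiPair q)).Finite := by
    apply Set.Finite.subset (Set.Finite.image
      (f := fun mn : ℤ × ℤ => ((mn.1 : ℚ) / (q.den : ℚ), (mn.2 : ℚ) / (q.den : ℚ)))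
      ((Set.finite_Icc (-C) C).prod (Set.finite_Icc (-C) C)))
    rintro p ⟨k, rfl⟩
    obtain ⟨m, n, hm, hn⟩ := phiPair_den q k
    obtain ⟨ha, hb⟩ := phiPair_bounds q h0 h1 k
    have hDpos : (0:ℝ) < (q.den : ℝ) := by exact_mod_cast q.pos
    have hm' : ((phiPair q k).1 : ℝ) = (m : ℝ) / (q.den : ℝ) := by exact_mod_cast congrArg (Rat.cast : ℚ → ℝ) hm
    have hn' : ((phiPair q k).2 : ℝ) = (n : ℝ) / (q.den : ℝ) := by exact_mod_cast congrArg (Rat.cast : ℚ → ℝ) hn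
    rw [hm'] at ha; rw [hn'] at hb
    rw [abs_div, abs_of_pos hDpos, div_lt_iff₀ hDpos] at ha hb
    have ham := abs_lt.mp ha
    have hbn := abs_lt.mp hb
    have hmi : m ∈ Set.Icc (-C) C := by
      rw [Set.mem_Icc, hC]
      constructor
      · have : ((-(4 * (q.den:ℤ)) : ℤ) : ℝ) ≤ (m : ℝ) := by push_cast; linarith [ham.1]
        exact_mod_cast this
      · have : (m : ℝ) ≤ ((4 * (q.den:ℤ) : ℤ) : ℝ) := by push_cast; linarith [ham.2]
        exact_mod_cast this
    have hni : n ∈ Set.Icc (-C) C := by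
      rw [Set.mem_Icc, hC]
      constructor
      · have : ((-(4 * (q.den:ℤ)) : ℤ) : ℝ) ≤ (n : ℝ) := by push_cast; linarith [hbn.1]
        exact_mod_cast this
      · have : (n : ℝ) ≤ ((4 * (q.den:ℤ) : ℤ) : ℝ) := by push_cast; linarith [hbn.2]
        exact_mod_cast this
    exact ⟨(m, n), Set.mk_mem_prod hmi hni, (Prod.ext hm hn).symm⟩
  exact (Set.infinite_range_of_injective hinj) hfin

lemma phiPair_zero_eq (q : ℚ) (h0 : 0 ≤ (q:ℝ)) (h1 : (q:ℝ) < 1) (p : ℕ) :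
    ∀ k, phiPair q k = phiPair q (k + p) → phiPair q 0 = phiPair q p := by
  intro k
  induction k with
  | zero => intro h; simpa using h
  | succ k ih =>
    intro h
    apply ih
    apply phiPair_back q h0 h1
    have hkp : k + 1 + p = (k + p) + 1 := by omega
    rwa [hkp] at h

theorem stmt8 (q : ℚ) (x : ℝ) (hxq : x = (q : ℝ)) (hx : x ∈ Set.Ico (0 : ℝ) 1) :
    ∃ p : ℕ, 0 < p ∧ ∀ i, 1 ≤ i → phiDigit x (i + p) = phiDigit x i := by
  have h0 : 0 ≤ (q:ℝ) := hxq ▸ hx.1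
  have h1 : (q:ℝ) < 1 := hxq ▸ hx.2
  obtain ⟨k, l, hkl, hne⟩ := Function.not_injective_iff.mp (phiPair_not_injective q h0 h1)
  -- wlog k < l
  obtain ⟨k, l, hlt, heq⟩ : ∃ k l : ℕ, k < l ∧ phiPair q k = phiPair q l := by
    rcases lt_or_gt_of_ne hne with h | h
    · exact ⟨k, l, h, hkl⟩
    · exact ⟨l, k, h, hkl.symm⟩
  set p := l - k with hp
  have hppos : 0 < p := by omega
  have hkp : k + p = l := by omega
  have hzero : phiPair q 0 = phiPair q p :=
    phiPair_zero_eq q h0 h1 p k (by rw [hkp]; exact heq)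
  have hper : phiMap^[p] x = x := by
    rw [hxq, ← pemb_phiPair, ← hzero]; simp [phiPair, pemb]
  refine ⟨p, hppos, fun i hi => ?_⟩
  unfold phiDigit
  have hidx : i + p - 1 = (i - 1) + p := by omega
  rw [hidx, Function.iterate_add_apply, hper]
end

section
/- If x ∈ ℚ(φ) ∩ [0,1), then the base-φ digit sequence of x is ultimately periodic. -/
open Real goldenRatio

lemma phiMap_iter_mem (x : ℝ) (hx : x ∈ Set.Ico (0:ℝ) 1) (i : ℕ) :
    phiMap^[i] x ∈ Set.Ico (0:ℝ) 1 := by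
  cases i with
  | zero => simpa using hx
  | succ n =>
    rw [Function.iterate_succ_apply']
    exact ⟨Int.fract_nonneg _, Int.fract_lt_one _⟩

lemma absGoldConj : |ψ| ≤ 2/3 := by
  have h5 : √5 < 7/3 := by
    rw [show (7:ℝ)/3 = √((7/3)^2) by rw [Real.sqrt_sq]; norm_num]
    apply Real.sqrt_lt_sqrt <;> norm_num
  have : -1 < ψ := neg_one_lt_goldenConj
  have : ψ < 0 := goldenConj_neg
  rw [abs_of_neg this]
  rw [goldenConj]
  nlinarith

lemma step_eq (g : ℝ) (hg : g^2 = g + 1) (d m n k : ℤ) (hd : (d:ℝ) ≠ 0) :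
    ((n:ℝ) - k*d)/d + ((m:ℝ)+(n:ℝ))/d * g = g * ((m:ℝ)/d + (n:ℝ)/d * g) - (k:ℝ) := by
  field_simp
  linear_combination (-(n:ℝ)) * hg

lemma key (x : ℝ) (hx : x ∈ Set.Ico (0:ℝ) 1) (d : ℤ) (hd : 0 < d) (C : ℝ) (hC3 : 3 ≤ C)
    (m₀ n₀ : ℤ) (hx0 : x = m₀/d + n₀/d * φ) (hC0 : |(m₀:ℝ)/d + n₀/d * ψ| ≤ C) :
    ∀ i, ∃ m n : ℤ, phiMap^[i] x = m/d + n/d * φ ∧ |(m:ℝ)/d + n/d * ψ| ≤ C := by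
  intro i
  induction i with
  | zero => exact ⟨m₀, n₀, hx0, hC0⟩
  | succ i ih =>
    obtain ⟨m, n, hy, hconj⟩ := ih
    set y := phiMap^[i] x with hyd
    have hmem : y ∈ Set.Ico (0:ℝ) 1 := phiMap_iter_mem x hx i
    have hd' : (d:ℝ) ≠ 0 := by exact_mod_cast hd.ne'
    set k : ℤ := ⌊φ * y⌋ with hk
    have hk0 : 0 ≤ k := Int.floor_nonneg.2 (mul_nonneg goldenRatio_pos.le hmem.1)
    have hk1 : k ≤ 1 := by
      have : φ * y < 2 := by nlinarith [goldenRatio_lt_two, goldenRatio_pos, hmem.1, hmem.2]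
      have h2 : k < 2 := Int.floor_lt.2 (by exact_mod_cast this)
      omega
    refine ⟨n - k * d, m + n, ?_, ?_⟩
    · rw [Function.iterate_succ_apply', ← hyd]
      show Int.fract (φ * y) = _
      rw [Int.fract, ← hk, hy]
      have := step_eq φ goldenRatio_sq d m n k hd'
      push_cast at this ⊢
      linarith [this]
    · have hco : ((n:ℝ) - (k:ℝ)*(d:ℝ))/d + ((m:ℝ)+(n:ℝ))/d * ψ = ψ * ((m:ℝ)/d + (n:ℝ)/d * ψ) - (k:ℝ) :=
        step_eq ψ goldenConj_sq d m n k hd'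
      push_cast
      rw [hco]
      have h1 : |ψ * ((m:ℝ)/d + n/d * ψ)| ≤ (2/3) * C := by
        rw [abs_mul]
        have := absGoldConj
        nlinarith [abs_nonneg ((m:ℝ)/d + n/d * ψ)]
      have h2 : |(k:ℝ)| ≤ 1 := by
        rw [abs_le]
        constructor
        · exact_mod_cast (by omega : (-1:ℤ) ≤ k)
        · exact_mod_cast hk1
      calc |ψ * ((m:ℝ)/d + n/d * ψ) - (k:ℝ)| ≤ _ + _ := abs_sub _ _
        _ ≤ (2/3)*C + 1 := add_le_add h1 h2
        _ ≤ C := by linarith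

lemma periodic_of_eq (x : ℝ) (i j : ℕ) (h : i < j) (hyy : phiMap^[i] x = phiMap^[j] x) :
    ∃ p N : ℕ, 0 < p ∧ ∀ t, N ≤ t → phiDigit x (t + p) = phiDigit x t := by
  refine ⟨j - i, i + 1, by omega, ?_⟩
  intro t ht
  have hiter : ∀ u, i ≤ u → phiMap^[u] x = phiMap^[u + (j-i)] x := by
    intro u hu
    have h1 : phiMap^[u] x = phiMap^[(u-i) + i] x := by congr 1; omega
    rw [h1, Function.iterate_add_apply, hyy, ← Function.iterate_add_apply]
    congr 1; omega
  unfold phiDigit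
  rw [show t + (j-i) - 1 = (t-1) + (j-i) by omega, ← hiter (t-1) (by omega)]

theorem stmt9 (x : ℝ) (hx : x ∈ Set.Ico (0 : ℝ) 1)
    (hQ : ∃ q₁ q₂ : ℚ, x = (q₁ : ℝ) + (q₂ : ℝ) * φ) :
    ∃ p N : ℕ, 0 < p ∧ ∀ i, N ≤ i → phiDigit x (i + p) = phiDigit x i := by
  obtain ⟨q₁, q₂, hq⟩ := hQ
  set d : ℤ := (q₁.den : ℤ) * (q₂.den : ℤ) with hdd
  have hd : 0 < d := by positivity
  have hd' : (d:ℝ) ≠ 0 := by exact_mod_cast hd.ne'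
  set m₀ : ℤ := q₁.num * q₂.den with hm₀
  set n₀ : ℤ := q₂.num * q₁.den with hn₀
  have e₁ : ((m₀:ℝ))/d = (q₁:ℝ) := by
    rw [hm₀, hdd]; push_cast
    rw [Rat.cast_def]; field_simp
  have e₂ : ((n₀:ℝ))/d = (q₂:ℝ) := by
    rw [hn₀, hdd]; push_cast
    rw [Rat.cast_def]; field_simp
  set C : ℝ := |(m₀:ℝ)/d + n₀/d * ψ| + 3 with hC
  have hC3 : 3 ≤ C := by
    rw [hC]; linarith [abs_nonneg ((m₀:ℝ)/d + (n₀:ℝ)/d * ψ)]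
  have hx0 : x = (m₀:ℝ)/d + (n₀:ℝ)/d * φ := by rw [e₁, e₂, hq]
  have hC0 : |(m₀:ℝ)/d + (n₀:ℝ)/d * ψ| ≤ C := by rw [hC]; linarith
  have hK := key x hx d hd C hC3 m₀ n₀ hx0 hC0
  -- integer bounds
  set M : ℤ := d * (⌈C⌉ + 2) with hM
  have hbd : ∀ i, ∃ m n : ℤ, phiMap^[i] x = (m:ℝ)/d + (n:ℝ)/d * φ ∧
      m ∈ Finset.Icc (-M) M ∧ n ∈ Finset.Icc (-M) M := by
    intro i
    obtain ⟨m, n, heq, hconj⟩ := hK i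
    have hmem := phiMap_iter_mem x hx i
    have hsub : (n:ℝ)/d * (φ - ψ) = phiMap^[i] x - ((m:ℝ)/d + (n:ℝ)/d * ψ) := by
      rw [heq]; ring
    have hs5 : (2:ℝ) ≤ φ - ψ := by
      rw [goldenRatio_sub_goldenConj]
      rw [show (2:ℝ) = √4 by rw [show (4:ℝ)=2^2 by norm_num, Real.sqrt_sq]; norm_num]
      exact Real.sqrt_le_sqrt (by norm_num)
    have habs : |(phiMap^[i] x) - ((m:ℝ)/d + (n:ℝ)/d * ψ)| ≤ 1 + C := by
      have h1 : |phiMap^[i] x| ≤ 1 := by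
        rw [abs_le]; exact ⟨by linarith [hmem.1], hmem.2.le⟩
      calc _ ≤ |phiMap^[i] x| + |(m:ℝ)/d + (n:ℝ)/d * ψ| := abs_sub _ _
        _ ≤ 1 + C := add_le_add h1 hconj
    have hnb : |(n:ℝ)/d| ≤ (1 + C)/2 := by
      have h0 : |(n:ℝ)/d| * 2 ≤ |(n:ℝ)/d| * (φ - ψ) := by
        apply mul_le_mul_of_nonneg_left hs5 (abs_nonneg _)
      have h1 : |(n:ℝ)/d * (φ - ψ)| = |(n:ℝ)/d| * (φ - ψ) := by
        rw [abs_mul, abs_of_nonneg (by linarith : (0:ℝ) ≤ φ - ψ)]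
      rw [hsub] at h1
      linarith [h1 ▸ habs]
    have hmb : |(m:ℝ)/d| ≤ C + 2 := by
      have h1 : (m:ℝ)/d = phiMap^[i] x - (n:ℝ)/d * φ := by rw [heq]; ring
      have h2 : |(n:ℝ)/d * φ| ≤ (1+C)/2 * 2 := by
        rw [abs_mul, abs_of_nonneg goldenRatio_pos.le]
        have := goldenRatio_lt_two
        nlinarith [abs_nonneg ((n:ℝ)/d)]
      have h3 : |phiMap^[i] x| ≤ 1 := by
        rw [abs_le]; exact ⟨by linarith [hmem.1], hmem.2.le⟩
      calc |(m:ℝ)/d| = |phiMap^[i] x - (n:ℝ)/d * φ| := by rw [h1]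
        _ ≤ |phiMap^[i] x| + |(n:ℝ)/d * φ| := abs_sub _ _
        _ ≤ 1 + (1+C)/2*2 := add_le_add h3 h2
        _ ≤ C + 2 := by linarith
    have hdR : (0:ℝ) < (d:ℝ) := by exact_mod_cast hd
    have hMR : (C + 2) * d ≤ (M:ℝ) := by
      rw [hM]; push_cast
      have := Int.le_ceil C
      nlinarith
    have hmM : |m| ≤ M := by
      have : |(m:ℝ)| ≤ (M:ℝ) := by
        have := (abs_div (m:ℝ) (d:ℝ)) ▸ hmb
        rw [abs_of_pos hdR] at this
        calc |(m:ℝ)| = |(m:ℝ)|/d * d := by field_simp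
          _ ≤ (C+2) * d := by apply mul_le_mul_of_nonneg_right this hdR.le
          _ ≤ M := hMR
      exact_mod_cast this
    have hnM : |n| ≤ M := by
      have : |(n:ℝ)| ≤ (M:ℝ) := by
        have := (abs_div (n:ℝ) (d:ℝ)) ▸ hnb
        rw [abs_of_pos hdR] at this
        calc |(n:ℝ)| = |(n:ℝ)|/d * d := by field_simp
          _ ≤ (1+C)/2 * d := by apply mul_le_mul_of_nonneg_right this hdR.le
          _ ≤ (C+2) * d := mul_le_mul_of_nonneg_right (by nlinarith [hC3, abs_nonneg ((m₀:ℝ)/d + (n₀:ℝ)/d * ψ)]) hdR.le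
          _ ≤ M := hMR
      exact_mod_cast this
    exact ⟨m, n, heq, Finset.mem_Icc.2 (abs_le.1 hmM), Finset.mem_Icc.2 (abs_le.1 hnM)⟩
  -- pigeonhole
  classical
  choose g₁ g₂ heq hm hn using hbd
  set s : Finset (ℤ × ℤ) := (Finset.Icc (-M) M) ×ˢ (Finset.Icc (-M) M) with hs
  obtain ⟨i, hi, j, hj, hij, hgij⟩ :=
    Finset.exists_ne_map_eq_of_card_lt_of_maps_to
      (s := Finset.range (s.card + 1)) (t := s)
      (by simp) (fun i _ => by rw [hs, Finset.mem_coe, Finset.mem_product]; exact ⟨hm i, hn i⟩)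
      (f := fun i => (g₁ i, g₂ i))
  have h1 : g₁ i = g₁ j := congrArg Prod.fst hgij
  have h2 : g₂ i = g₂ j := congrArg Prod.snd hgij
  have hyy : phiMap^[i] x = phiMap^[j] x := by
    rw [heq i, heq j, h1, h2]
  -- wlog i < j
  rcases lt_or_gt_of_ne hij with h | h
  case _ =>
    exact periodic_of_eq x i j h hyy
  case _ =>
    exact periodic_of_eq x j i h hyy.symm
end

section
/- For every integer a ≥ 3 there exist integers M, n_0, i_0 ≥ 1 and periodic {0,1}-valued sequences z^{(0)}, ..., z^{(M-1)} and w^{(1)}, ..., w^{(i_0)} such that for all n ≥ n_0 with gcd(a, F_n) = 1, the Zeckendorf representation of (a^{-1} mod F_n) is ∑_{i=i_0}^{n-1} z^{(n mod M)}_{n-i}·F_i + ∑_{i=1}^{i_0-1} w^{(i)}_n·F_i. -/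
open Real goldenRatio Filter

namespace S12


lemma sqrt5_pos : (0:ℝ) < √5 := Real.sqrt_pos.mpr (by norm_num)
lemma sqrt5_gt : (2.2:ℝ) < √5 := by
  have h : (2.2:ℝ) = √(2.2^2) := (Real.sqrt_sq (by norm_num)).symm
  rw [h]
  exact Real.sqrt_lt_sqrt (by positivity) (by norm_num)

lemma gold_gt : (1.6:ℝ) < φ := by
  have := sqrt5_gt; rw [goldenRatio]; nlinarith

lemma psi_abs_lt_one : |ψ| < 1 := by
  rw [abs_lt]; exact ⟨neg_one_lt_goldenConj, by linarith [goldenConj_neg]⟩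

/-- Binet-type estimate: if `0 < c·φ + d` then `c·F_{i+1} + d·F_i` exceeds any constant
eventually. -/
lemma eventually_fib_comb_gt (c d C : ℤ) (h : 0 < (c:ℝ) * φ + d) :
    ∀ᶠ i in atTop, C < c * Nat.fib (i+1) + d * Nat.fib i := by
  have key : ∀ i : ℕ, ((c * Nat.fib (i+1) + d * Nat.fib i : ℤ) : ℝ)
      = (((c:ℝ)*φ + d) * φ^i - ((c:ℝ)*ψ + d) * ψ^i) / √5 := by
    intro i
    push_cast
    rw [Real.coe_fib_eq, Real.coe_fib_eq]
    have h5 : √5 ≠ 0 := ne_of_gt sqrt5_pos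
    field_simp
    ring
  have hφ : Tendsto (fun i : ℕ => φ ^ i) atTop atTop :=
    tendsto_pow_atTop_atTop_of_one_lt one_lt_goldenRatio
  have hev : ∀ᶠ i in atTop, (|(c:ℝ)*ψ + d| + |(C:ℤ)| * √5 + 1) / ((c:ℝ)*φ + d) < φ ^ i :=
    hφ.eventually_gt_atTop _
  filter_upwards [hev] with i hi
  have hnum : |(c:ℝ)*ψ + d| + |(C:ℤ)| * √5 + 1 < ((c:ℝ)*φ + d) * φ^i := by
    have := (div_lt_iff₀ h).mp hi; linarith
  have habs : |((c:ℝ)*ψ + d) * ψ^i| ≤ |(c:ℝ)*ψ + d| := by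
    rw [abs_mul]
    have h1 : |ψ^i| ≤ 1 := by
      rw [abs_pow]
      exact pow_le_one₀ (abs_nonneg _) (le_of_lt psi_abs_lt_one)
    nlinarith [abs_nonneg ((c:ℝ)*ψ + d)]
  have hC : ((C:ℤ):ℝ) * √5 ≤ |(C:ℤ)| * √5 := by
    have h2 : ((C:ℤ):ℝ) ≤ ((|C|:ℤ):ℝ) := by
      have := le_abs_self C; exact_mod_cast this
    nlinarith [sqrt5_pos]
  have : ((C:ℤ):ℝ) < ((c * Nat.fib (i+1) + d * Nat.fib i : ℤ) : ℝ) := by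
    rw [key, lt_div_iff₀ sqrt5_pos]
    have := le_trans (le_abs_self (((c:ℝ)*ψ + d) * ψ^i)) habs
    linarith
  exact_mod_cast this



lemma s5 : (√5:ℝ)^2 = 5 := Real.sq_sqrt (by norm_num)

lemma int_gold_eq_zero {u v : ℤ} (h : (u:ℝ) * φ + v = 0) : u = 0 ∧ v = 0 := by
  rcases eq_or_ne u 0 with hu | hu
  · refine ⟨hu, ?_⟩
    have : (v:ℝ) = 0 := by rw [hu] at h; push_cast at h; linarith
    exact_mod_cast this
  · exfalso
    refine goldenRatio_irrational ⟨(-v : ℚ) / (u : ℚ), ?_⟩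
    have hu' : (u:ℝ) ≠ 0 := Int.cast_ne_zero.mpr hu
    push_cast
    rw [goldenRatio] at h ⊢
    field_simp
    linear_combination (-2:ℝ)*h

/-- digit emitted from state `s` -/
noncomputable def dg (a : ℕ) (s : ℤ × ℤ) : ℕ :=
  if (a:ℝ) ≤ ((s.1 + s.2 : ℤ) : ℝ) * φ + (s.1 : ℝ) then 1 else 0

/-- state sequence of the φ-expansion of t/a -/
noncomputable def St (a t : ℕ) : ℕ → ℤ × ℤ
  | 0 => (0, (t : ℤ))
  | j+1 => ((St a t j).1 + (St a t j).2, (St a t j).1 - (dg a (St a t j) : ℤ) * a)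

/-- digit arriving at state j -/
noncomputable def tag (a t : ℕ) : ℕ → ℕ
  | 0 => 0
  | j+1 => dg a (St a t j)

noncomputable def xi (s : ℤ × ℤ) : ℝ := (s.1 : ℝ) * φ + s.2
noncomputable def xib (s : ℤ × ℤ) : ℝ := (s.1 : ℝ) * ψ + s.2

lemma dg_le_one (a : ℕ) (s : ℤ × ℤ) : dg a s ≤ 1 := by
  unfold dg; split <;> simp

lemma tag_le_one (a t : ℕ) : ∀ j, tag a t j ≤ 1
  | 0 => by simp [tag]
  | j+1 => dg_le_one a _

lemma phi_xi (s : ℤ × ℤ) : ((s.1 + s.2 : ℤ) : ℝ) * φ + (s.1 : ℝ) = φ * xi s := by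
  unfold xi; push_cast; linear_combination (-(s.1:ℝ)/4) * s5

lemma xi_step (a t : ℕ) (j : ℕ) :
    xi (St a t (j+1)) = φ * xi (St a t j) - (dg a (St a t j) : ℝ) * a := by
  show xi ((St a t j).1 + (St a t j).2, (St a t j).1 - (dg a (St a t j) : ℤ) * a) = _
  unfold xi
  push_cast
  linear_combination (-((St a t j).1:ℝ)/4) * s5

lemma xib_step (a t : ℕ) (j : ℕ) :
    xib (St a t (j+1)) = ψ * xib (St a t j) - (dg a (St a t j) : ℝ) * a := by
  show xib ((St a t j).1 + (St a t j).2, (St a t j).1 - (dg a (St a t j) : ℤ) * a) = _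
  unfold xib
  push_cast
  linear_combination (-((St a t j).1:ℝ)/4) * s5

lemma dg_eq_one_iff (a : ℕ) (s : ℤ × ℤ) : dg a s = 1 ↔ (a:ℝ) ≤ φ * xi s := by
  unfold dg; rw [← phi_xi]
  split <;> rename_i h
  · exact ⟨fun _ => h, fun _ => rfl⟩
  · exact ⟨fun h1 => by simp at h1, fun h1 => absurd h1 h⟩

lemma dg_eq_zero_iff (a : ℕ) (s : ℤ × ℤ) : dg a s = 0 ↔ φ * xi s < (a:ℝ) := by
  unfold dg; rw [← phi_xi]
  split <;> rename_i h
  · exact ⟨fun h1 => by simp at h1, fun h1 => absurd h (not_le.mpr h1)⟩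
  · exact ⟨fun _ => not_le.mp h, fun _ => rfl⟩

set_option maxHeartbeats 1000000 in
/-- The master invariant. -/
lemma invariant {a t : ℕ} (ha : 3 ≤ a) (ht1 : 1 ≤ t) (ht2 : t < a) : ∀ j,
    (0 < xi (St a t j) ∧ xi (St a t j) < a) ∧
    (tag a t j = 0 → (a:ℝ) * ψ < xib (St a t j) ∧ xib (St a t j) < a) ∧
    (tag a t j = 1 → -((a:ℝ) * φ) < xib (St a t j) ∧ xib (St a t j) < (a:ℝ) * ψ ∧
      xi (St a t j) < a * (φ - 1)) := by
  have ha' : (0:ℝ) < a := by positivity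
  have hψ : ψ < 0 := goldenConj_neg
  have hψ1 : -1 < ψ := neg_one_lt_goldenConj
  have hφ1 : 1 < φ := one_lt_goldenRatio
  have hφ2 : φ < 2 := goldenRatio_lt_two
  have hφψ : φ * ψ = -1 := goldenRatio_mul_goldenConj
  have hψsq : ψ^2 = ψ + 1 := goldenConj_sq
  have hφsq : φ^2 = φ + 1 := goldenRatio_sq
  have hψφ : ψ - 1 = -φ := by
    have h1 := goldenRatio_add_goldenConj; linarith [one_sub_goldenConj]
  have ht1' : (1:ℝ) ≤ t := by exact_mod_cast ht1
  have ht2' : (t:ℝ) < a := by exact_mod_cast ht2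
  intro j
  induction j with
  | zero =>
    have hxi : xi (St a t 0) = t := by simp [St, xi]
    have hxib : xib (St a t 0) = t := by simp [St, xib]
    have htg : tag a t 0 = 0 := rfl
    refine ⟨⟨by rw [hxi]; linarith, by rw [hxi]; linarith⟩,
      fun _ => ⟨by rw [hxib]; nlinarith, by rw [hxib]; linarith⟩,
      fun h => by rw [htg] at h; omega⟩
  | succ j ih =>
    obtain ⟨⟨hxi0, hxia⟩, htag0, htag1⟩ := ih
    have htle := tag_le_one a t j
    have hxib_lo : -((a:ℝ) * φ) < xib (St a t j) := by
      rcases Nat.le_one_iff_eq_zero_or_eq_one.mp htle with h | h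
      · have := (htag0 h).1; nlinarith
      · exact (htag1 h).1
    have hxib_hi : xib (St a t j) < a := by
      rcases Nat.le_one_iff_eq_zero_or_eq_one.mp htle with h | h
      · exact (htag0 h).2
      · nlinarith [(htag1 h).2.1]
    rcases Nat.le_one_iff_eq_zero_or_eq_one.mp (dg_le_one a (St a t j)) with hd | hd
    · -- digit 0
      have hcond : φ * xi (St a t j) < a := (dg_eq_zero_iff a _).mp hd
      have htag' : tag a t (j+1) = 0 := hd
      refine ⟨⟨?_, ?_⟩, fun _ => ⟨?_, ?_⟩, fun h => by rw [htag'] at h; omega⟩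
      · rw [xi_step, hd]; push_cast; nlinarith
      · rw [xi_step, hd]; push_cast; nlinarith
      · rw [xib_step, hd]; push_cast; nlinarith
      · rw [xib_step, hd]; push_cast; nlinarith
    · -- digit 1
      have hcond : (a:ℝ) ≤ φ * xi (St a t j) := (dg_eq_one_iff a _).mp hd
      have htag' : tag a t (j+1) = 1 := hd
      have hprev0 : tag a t j = 0 := by
        rcases Nat.le_one_iff_eq_zero_or_eq_one.mp htle with h | h
        · exact h
        · exfalso; nlinarith [(htag1 h).2.2]
      have hxibj := htag0 hprev0
      have hne : φ * xi (St a t j) ≠ a := by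
        intro heq
        have hpx := phi_xi (St a t j)
        have h0 : (((St a t j).1 + (St a t j).2 : ℤ) : ℝ) * φ
            + (((St a t j).1 - (a:ℤ) : ℤ) : ℝ) = 0 := by
          push_cast at hpx ⊢; linarith
        obtain ⟨h1, h2⟩ := int_gold_eq_zero h0
        have hu : ((St a t j).1 : ℝ) = a := by
          have : (St a t j).1 = (a:ℤ) := by omega
          exact_mod_cast this
        have hv : ((St a t j).2 : ℝ) = -(a:ℝ) := by
          have : (St a t j).2 = -(a:ℤ) := by omega
          exact_mod_cast this
        have hxx : xib (St a t j) = (a:ℝ) * ψ - a := by unfold xib; rw [hu, hv]; ring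
        rw [hxx] at hxibj
        nlinarith [hxibj.1]
      refine ⟨⟨?_, ?_⟩, fun h => by rw [htag'] at h; omega, fun _ => ⟨?_, ?_, ?_⟩⟩
      · rw [xi_step, hd]; push_cast
        rcases lt_or_eq_of_le hcond with h | h
        · linarith
        · exact absurd h.symm hne
      · rw [xi_step, hd]; push_cast; nlinarith
      · rw [xib_step, hd]; push_cast; nlinarith [hxibj.2]
      · rw [xib_step, hd]; push_cast; nlinarith [hxibj.1]
      · rw [xi_step, hd]; push_cast; nlinarith


section Periodicity
variable {a t : ℕ}

lemma xib_bounds (ha : 3 ≤ a) (ht1 : 1 ≤ t) (ht2 : t < a) (j : ℕ) : -((a:ℝ) * φ) < xib (St a t j) ∧ xib (St a t j) < a := by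
  have ha' : (0:ℝ) < a := Nat.cast_pos.mpr (by omega)
  have hψ : ψ < 0 := goldenConj_neg
  have hφ1 : 1 < φ := one_lt_goldenRatio
  have hsum : φ + ψ = 1 := goldenRatio_add_goldenConj
  obtain ⟨_, h0, h1⟩ := invariant ha ht1 ht2 j
  rcases Nat.le_one_iff_eq_zero_or_eq_one.mp (tag_le_one a t j) with h | h
  · obtain ⟨hl, hr⟩ := h0 h; constructor <;> nlinarith
  · obtain ⟨hl, hr, _⟩ := h1 h; constructor <;> nlinarith

lemma state_mem_box (ha : 3 ≤ a) (ht1 : 1 ≤ t) (ht2 : t < a) (j : ℕ) :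
    St a t j ∈ Finset.Icc (-(2*(a:ℤ))) (2*a) ×ˢ Finset.Icc (-(5*(a:ℤ))) (5*a) := by
  have ha' : (0:ℝ) < a := Nat.cast_pos.mpr (by omega)
  obtain ⟨⟨hx0, hxa⟩, _⟩ := invariant ha ht1 ht2 j
  obtain ⟨hb0, hba⟩ := xib_bounds ha ht1 ht2 j
  set u := (St a t j).1
  set v := (St a t j).2
  have hxi : xi (St a t j) = (u:ℝ)*φ + v := rfl
  have hxib : xib (St a t j) = (u:ℝ)*ψ + v := rfl
  rw [hxi] at hx0 hxa
  rw [hxib] at hb0 hba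
  have hsub : (u:ℝ) * (φ - ψ) = ((u:ℝ)*φ + v) - ((u:ℝ)*ψ + v) := by ring
  have hs5 : φ - ψ = √5 := goldenRatio_sub_goldenConj
  have h22 : (2.2:ℝ) < √5 := sqrt5_gt
  have h53 : (√5:ℝ) < 3 := by
    have : (√5:ℝ) < √9 := Real.sqrt_lt_sqrt (by norm_num) (by norm_num)
    simpa [show (9:ℝ) = 3^2 by norm_num, Real.sqrt_sq] using this
  have hφ2 : φ < 2 := goldenRatio_lt_two
  have hφ1 : 1 < φ := one_lt_goldenRatio
  have hu_hi : (u:ℝ) ≤ 2*a := by nlinarith [hsub]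
  have hu_lo : -(2*(a:ℝ)) ≤ u := by nlinarith [hsub]
  have hv_hi : (v:ℝ) ≤ 5*a := by nlinarith
  have hv_lo : -(5*(a:ℝ)) ≤ v := by nlinarith
  simp only [Finset.mem_product, Finset.mem_Icc]
  push_cast
  refine ⟨⟨?_, ?_⟩, ?_, ?_⟩
  · exact_mod_cast hu_lo
  · exact_mod_cast hu_hi
  · exact_mod_cast hv_lo
  · exact_mod_cast hv_hi

lemma exists_collision (ha : 3 ≤ a) (ht1 : 1 ≤ t) (ht2 : t < a) : ∃ j k : ℕ, j < k ∧ St a t j = St a t k := by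
  classical
  set box := Finset.Icc (-(2*(a:ℤ))) (2*a) ×ˢ Finset.Icc (-(5*(a:ℤ))) (5*a) with hbox
  obtain ⟨j, hj, k, hk, hjk, heq⟩ :=
    Finset.exists_ne_map_eq_of_card_lt_of_maps_to
      (show box.card < (Finset.range (box.card + 1)).card by simp)
      (fun j _ => state_mem_box ha ht1 ht2 j)
  rcases Nat.lt_or_ge j k with h | h
  · exact ⟨j, k, h, heq⟩
  · exact ⟨k, j, lt_of_le_of_ne h (Ne.symm hjk), heq.symm⟩

lemma tag_iff (ha : 3 ≤ a) (ht1 : 1 ≤ t) (ht2 : t < a) (j : ℕ) : tag a t j = 1 ↔ xib (St a t j) < (a:ℝ) * ψ := by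
  obtain ⟨_, h0, h1⟩ := invariant ha ht1 ht2 j
  constructor
  · exact fun h => (h1 h).2.1
  · intro h
    rcases Nat.le_one_iff_eq_zero_or_eq_one.mp (tag_le_one a t j) with h' | h'
    · exact absurd h (not_lt.mpr (le_of_lt (h0 h').1))
    · exact h'

lemma prev_recover (j : ℕ) : St a t j =
    ((St a t (j+1)).2 + (tag a t (j+1) : ℤ) * a,
     (St a t (j+1)).1 - (St a t (j+1)).2 - (tag a t (j+1) : ℤ) * a) := by
  have h1 : St a t (j+1) = ((St a t j).1 + (St a t j).2,
      (St a t j).1 - (dg a (St a t j) : ℤ) * a) := rfl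
  have h2 : tag a t (j+1) = dg a (St a t j) := rfl
  rw [h2, h1]
  exact Prod.ext (by ring) (by ring)

lemma state_back (ha : 3 ≤ a) (ht1 : 1 ≤ t) (ht2 : t < a) : ∀ j k, St a t j = St a t k → St a t 0 = St a t (k - j) := by
  intro j
  induction j with
  | zero => intro k h; simpa using h
  | succ j ih =>
    intro k h
    cases k with
    | zero =>
      -- St (j+1) = St 0 : handle via symmetry: 0 - (j+1) = 0; goal St 0 = St 0
      simp
    | succ k' =>
      have htg : tag a t (j+1) = tag a t (k'+1) := by
        rcases Nat.le_one_iff_eq_zero_or_eq_one.mp (tag_le_one a t (j+1)) with h' | h'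
        · rcases Nat.le_one_iff_eq_zero_or_eq_one.mp (tag_le_one a t (k'+1)) with h'' | h''
          · rw [h', h'']
          · exfalso
            have := (tag_iff ha ht1 ht2 (k'+1)).mp h''
            rw [← h] at this
            have := (tag_iff ha ht1 ht2 (j+1)).mpr this
            omega
        · have := (tag_iff ha ht1 ht2 (j+1)).mp h'
          rw [h] at this
          have := (tag_iff ha ht1 ht2 (k'+1)).mpr this
          omega
      have hprev : St a t j = St a t k' := by
        rw [prev_recover, prev_recover (j := k'), h, htg]
      have := ih k' hprev
      simpa using this

lemma exists_cycle (ha : 3 ≤ a) (ht1 : 1 ≤ t) (ht2 : t < a) : ∃ K, 0 < K ∧ St a t K = St a t 0 := by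
  obtain ⟨j, k, hjk, heq⟩ := exists_collision ha ht1 ht2
  exact ⟨k - j, by omega, (state_back ha ht1 ht2 j k heq).symm⟩

end Periodicity

section PeriodicFacts
variable {a t K : ℕ}

lemma st_add_period (hK : St a t K = St a t 0) : ∀ j, St a t (j + K) = St a t j := by
  intro j
  induction j with
  | zero => simpa using hK
  | succ j ih =>
    have hidx : j + 1 + K = (j + K) + 1 := by omega
    rw [hidx]
    show ((St a t (j+K)).1 + (St a t (j+K)).2, (St a t (j+K)).1 - (dg a (St a t (j+K)) : ℤ) * a) = _
    rw [ih]
    rfl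

lemma st_mod (hKpos : 0 < K) (hK : St a t K = St a t 0) (j : ℕ) :
    St a t j = St a t (j % K) := by
  have hq : ∀ q r, St a t (r + q * K) = St a t r := by
    intro q
    induction q with
    | zero => simp
    | succ q ih =>
      intro r
      have : r + (q+1) * K = (r + q * K) + K := by ring
      rw [this, st_add_period hK, ih]
  conv_lhs => rw [← Nat.mod_add_div' j K]
  exact hq _ _

lemma tag_mod (hKpos : 0 < K) (hK : St a t K = St a t 0) (j : ℕ) :
    tag a t (j + 1) = dg a (St a t (j % K)) := by
  show dg a (St a t j) = _
  rw [← st_mod hKpos hK]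

end PeriodicFacts
lemma telescope (a t n : ℕ) : ∀ J, J ≤ n →
    (a:ℤ) * (∑ j ∈ Finset.Icc 1 J, (tag a t j : ℤ) * (Nat.fib (n - j) : ℤ)) =
      (t:ℤ) * Nat.fib n -
        ((St a t J).1 * (Nat.fib (n - J + 1) : ℤ) + (St a t J).2 * (Nat.fib (n - J) : ℤ)) := by
  intro J
  induction J with
  | zero => simp [St]
  | succ J ih =>
    intro h
    have hJ : J ≤ n := by omega
    have h1 : n - J = (n - (J+1)) + 1 := by omega
    have h2 : n - J + 1 = (n - (J+1)) + 2 := by omega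
    have hst1 : (St a t (J+1)).1 = (St a t J).1 + (St a t J).2 := rfl
    have hst2 : (St a t (J+1)).2 = (St a t J).1 - (dg a (St a t J) : ℤ) * a := rfl
    have htg : (tag a t (J+1) : ℤ) = (dg a (St a t J) : ℤ) := rfl
    rw [Finset.sum_Icc_succ_top (by omega : 1 ≤ J+1), mul_add, ih hJ, hst1, hst2, htg]
    rw [h2, h1, Nat.fib_add_two]
    push_cast
    ring

lemma exists_pisano (a : ℕ) (ha : 3 ≤ a) :
    ∃ P, 0 < P ∧ ∀ n, Nat.fib (n + P) ≡ Nat.fib n [MOD a] := by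
  haveI : NeZero a := ⟨by omega⟩
  set f : ZMod a × ZMod a → ZMod a × ZMod a := fun p => (p.2, p.1 + p.2) with hf
  have hfinj : Function.Injective f := by
    intro p q h
    rw [Prod.ext_iff] at h ⊢
    obtain ⟨h1, h2⟩ := h
    simp only [hf] at h1 h2
    constructor
    · have := h2; rw [h1] at this; exact add_right_cancel this
    · exact h1
  set g : ℕ → ZMod a × ZMod a := fun n => ((Nat.fib n : ZMod a), (Nat.fib (n+1) : ZMod a))
    with hgdef
  have hg : ∀ n, g (n+1) = f (g n) := by
    intro n
    simp only [hgdef, hf]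
    refine Prod.ext rfl ?_
    show ((Nat.fib (n+2) : ZMod a)) = (Nat.fib n : ZMod a) + (Nat.fib (n+1) : ZMod a)
    rw [Nat.fib_add_two]; push_cast; ring
  obtain ⟨j, k, hjk, heq⟩ := Finite.exists_ne_map_eq_of_infinite g
  wlog hlt : j < k generalizing j k
  · exact this k j hjk.symm heq.symm (by omega)
  have back : ∀ j k, g j = g k → g 0 = g (k - j) := by
    intro j
    induction j with
    | zero => intro k h; simpa using h
    | succ j ih =>
      intro k h
      cases k with
      | zero => simp
      | succ k' =>
        have : g j = g k' := hfinj (by rw [← hg, ← hg, h])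
        simpa using ih k' this
  have h0 : g 0 = g (k - j) := back j k heq
  refine ⟨k - j, by omega, ?_⟩
  have hper : ∀ n, g (n + (k-j)) = g n := by
    intro n
    induction n with
    | zero => simpa using h0.symm
    | succ n ih =>
      have : n + 1 + (k-j) = (n + (k-j)) + 1 := by omega
      rw [this, hg, ih, ← hg]
  intro n
  have := congrArg Prod.fst (hper n)
  simp only [hgdef] at this
  exact (ZMod.natCast_eq_natCast_iff _ _ _).mp this

lemma fib_congr_of_period {a P : ℕ} (hP : ∀ n, Nat.fib (n + P) ≡ Nat.fib n [MOD a]) :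
    ∀ q m, Nat.fib (m + q * P) ≡ Nat.fib m [MOD a] := by
  intro q
  induction q with
  | zero => intro m; simp [Nat.ModEq.refl]
  | succ q ih =>
    intro m
    have : m + (q+1) * P = (m + q * P) + P := by ring
    rw [this]
    exact (hP _).trans (ih m)

lemma exists_t {a ρ : ℕ} (ha : 3 ≤ a) (h : Nat.gcd a ρ = 1) :
    ∃ t, 1 ≤ t ∧ t < a ∧ (a:ℤ) ∣ ((t:ℤ) * ρ + 1) := by
  obtain ⟨m, -, hm⟩ := Nat.exists_mul_mod_eq_one_of_coprime
    (Nat.coprime_comm.mp h) (by omega)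
  set μ := m % a with hμ
  have hμa : μ < a := Nat.mod_lt _ (by omega)
  have hρμ : ρ * μ % a = 1 := by
    have h1 : ρ * μ % a = (ρ % a) * (m % a) % a := by
      rw [Nat.mul_mod, Nat.mod_eq_of_lt hμa]
    rw [h1, ← Nat.mul_mod]
    exact hm
  have hμ0 : 0 < μ := by
    rcases Nat.eq_zero_or_pos μ with h0 | h0
    · rw [h0] at hρμ; simp at hρμ
    · exact h0
  refine ⟨a - μ, by omega, by omega, ?_⟩
  obtain ⟨q, hq⟩ : ∃ q, ρ * μ = a * q + 1 :=
    ⟨ρ * μ / a, by rw [← hρμ]; exact (Nat.div_add_mod _ _).symm⟩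
  have hcast : ((a - μ : ℕ) : ℤ) = (a:ℤ) - μ := by
    rw [Nat.cast_sub (le_of_lt hμa)]
  rw [hcast]
  refine ⟨(ρ:ℤ) - q, ?_⟩
  have hq' : (ρ:ℤ) * μ = a * q + 1 := by exact_mod_cast hq
  linear_combination -hq'

lemma invMod_eq {a m x : ℕ} (hm : 1 < m) (hco : Nat.gcd a m = 1)
    (hx : a * x % m = 1 % m) (hx0 : 0 < x) (hxm : x < m) : invMod a m = x := by
  have hne : x ∈ {b | 0 < b ∧ a * b % m = 1 % m} := ⟨hx0, hx⟩
  have h1 : invMod a m ≤ x := Nat.sInf_le hne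
  obtain ⟨hy0, hy⟩ := Nat.sInf_mem (⟨x, hne⟩ : Set.Nonempty {b | 0 < b ∧ a * b % m = 1 % m})
  have hmod : a * invMod a m ≡ a * x [MOD m] := hy.trans hx.symm
  have hco' : Nat.gcd m a = 1 := by rwa [Nat.gcd_comm]
  have hyx : invMod a m ≡ x [MOD m] := Nat.ModEq.cancel_left_of_coprime hco' hmod
  have hfin : invMod a m % m = x % m := hyx
  rw [Nat.mod_eq_of_lt (lt_of_le_of_lt h1 hxm), Nat.mod_eq_of_lt hxm] at hfin
  exact hfin

section Zeck
local instance : IsTrans ℕ (fun a b ↦ b + 2 ≤ a) :=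
  ⟨fun _a _b _c hba hcb => by omega⟩

lemma zeck_pairwise (N : ℕ) :
    (Nat.zeckendorf N ++ [0]).Pairwise (fun a b => b + 2 ≤ a) :=
  List.isChain_iff_pairwise.mp (Nat.isZeckendorfRep_zeckendorf N)

lemma zeck_two_le {N x : ℕ} (hx : x ∈ Nat.zeckendorf N) : 2 ≤ x := by
  have h := (List.pairwise_append.mp (zeck_pairwise N)).2.2 x hx 0 (by simp)
  simpa using h

lemma zeck_nodup (N : ℕ) : (Nat.zeckendorf N).Nodup := by
  have h := (List.pairwise_append.mp (zeck_pairwise N)).1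
  exact h.imp (fun {x y} hxy => by omega)

lemma pairwise_mem_rel {α : Type*} {r : α → α → Prop} :
    ∀ {l : List α}, l.Pairwise r → ∀ {x y}, x ∈ l → y ∈ l → x ≠ y → r x y ∨ r y x := by
  intro l hl
  induction hl with
  | nil => intro x y hx _ _; simp at hx
  | cons hrel _ ih =>
    intro x y hx hy hxy
    rcases List.mem_cons.mp hx with rfl | hx'
    · rcases List.mem_cons.mp hy with rfl | hy'
      · exact absurd rfl hxy
      · exact Or.inl (hrel y hy')
    · rcases List.mem_cons.mp hy with rfl | hy'
      · exact Or.inr (hrel x hx')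
      · exact ih hx' hy' hxy

lemma zeck_no_consec {N x : ℕ} (hx : x ∈ Nat.zeckendorf N) (hx1 : x + 1 ∈ Nat.zeckendorf N) :
    False := by
  have h := (List.pairwise_append.mp (zeck_pairwise N)).1
  have := pairwise_mem_rel h hx hx1 (by omega)
  omega

lemma zeck_fib_le {N x : ℕ} (hx : x ∈ Nat.zeckendorf N) : Nat.fib x ≤ N := by
  conv_rhs => rw [← Nat.sum_zeckendorf_fib N]
  exact List.single_le_sum (fun _ _ => Nat.zero_le _) _ (List.mem_map_of_mem hx)

lemma zeck_lt_of_lt_fib {N x m : ℕ} (hm : 2 ≤ m) (hN : N < Nat.fib m)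
    (hx : x ∈ Nat.zeckendorf N) : x < m := by
  by_contra hge
  exact absurd (lt_of_le_of_lt (zeck_fib_le hx) hN)
    (not_lt.mpr (Nat.fib_mono (by omega)))

lemma zeck_sum_indicator {N m : ℕ} (hm : 2 ≤ m) (hN : N < Nat.fib m) :
    ∑ i ∈ Finset.Icc 1 (m - 1), (if i ∈ Nat.zeckendorf N then 1 else 0) * Nat.fib i = N := by
  classical
  have hsub : (Nat.zeckendorf N).toFinset ⊆ Finset.Icc 1 (m-1) := by
    intro x hx
    rw [List.mem_toFinset] at hx
    have h2 := zeck_two_le hx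
    have hlt := zeck_lt_of_lt_fib hm hN hx
    rw [Finset.mem_Icc]
    omega
  have h1 : ∀ i : ℕ, (if i ∈ Nat.zeckendorf N then 1 else 0) * Nat.fib i
      = (if i ∈ Nat.zeckendorf N then Nat.fib i else 0) := by
    intro i; split <;> simp
  simp only [h1]
  rw [← Finset.sum_filter]
  have h2 : (Finset.Icc 1 (m-1)).filter (· ∈ Nat.zeckendorf N) = (Nat.zeckendorf N).toFinset := by
    ext x
    simp only [Finset.mem_filter, List.mem_toFinset]
    constructor
    · exact fun h => h.2
    · intro h
      exact ⟨hsub (List.mem_toFinset.mpr h), h⟩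
  rw [h2, List.sum_toFinset _ (zeck_nodup N), Nat.sum_zeckendorf_fib]

end Zeck

lemma ev_pos (u v : ℤ) (h : 0 < (u:ℝ) * φ + v) :
    ∀ᶠ i in atTop, 0 < u * (Nat.fib (i+1) : ℤ) + v * (Nat.fib i : ℤ) + 1 :=
  (eventually_fib_comb_gt u v (-1) h).mono (fun i hi => by omega)

lemma ev_lt (u v : ℤ) (a : ℕ) (h : (u:ℝ) * φ + v < a) :
    ∀ᶠ i in atTop, u * (Nat.fib (i+1) : ℤ) + v * (Nat.fib i : ℤ) + 1
      < (a:ℤ) * (Nat.fib i : ℤ) := by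
  have hc : 0 < ((-u : ℤ):ℝ) * φ + (((a:ℤ) - v : ℤ) : ℝ) := by push_cast; linarith
  exact (eventually_fib_comb_gt (-u) ((a:ℤ) - v) 1 hc).mono (fun i hi => by linarith)

lemma ev_shift (u v : ℤ) (a : ℕ) (h : φ * ((u:ℝ) * φ + v) < a) :
    ∀ᶠ i in atTop, u * (Nat.fib (i+1) : ℤ) + v * (Nat.fib i : ℤ) + 1
      < (a:ℤ) * (Nat.fib (i-1) : ℤ) := by
  have hexp : φ * ((u:ℝ) * φ + v) = ((u+v : ℤ):ℝ) * φ + (u:ℝ) := by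
    push_cast; linear_combination ((u:ℝ)/4) * s5
  have hc : 0 < ((-(u+v) : ℤ):ℝ) * φ + (((a:ℤ) - u : ℤ) : ℝ) := by
    push_cast
    push_cast at hexp
    linarith [hexp ▸ h]
  have hev := eventually_fib_comb_gt (-(u+v)) ((a:ℤ) - u) 1 hc
  rw [eventually_atTop] at hev ⊢
  obtain ⟨N, hN⟩ := hev
  refine ⟨N+1, fun i hi => ?_⟩
  have h1 := hN (i-1) (by omega)
  have h2 : i - 1 + 1 = i := by omega
  have hf : (Nat.fib (i+1) : ℤ) = (Nat.fib (i-1) : ℤ) + (Nat.fib i : ℤ) := by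
    have h3 : i + 1 = (i-1) + 2 := by omega
    rw [h3, Nat.fib_add_two, h2]; push_cast; ring
  rw [h2] at h1
  rw [hf]
  linarith

lemma tag_no11 {a t : ℕ} (ha : 3 ≤ a) (ht1 : 1 ≤ t) (ht2 : t < a) (j : ℕ)
    (h : tag a t j = 1) : tag a t (j+1) = 0 := by
  obtain ⟨⟨hxi0, _⟩, _, h1⟩ := invariant ha ht1 ht2 j
  have hxi := (h1 h).2.2
  show dg a (St a t j) = 0
  rw [dg_eq_zero_iff]
  have hg : φ^2 = φ + 1 := goldenRatio_sq
  nlinarith [one_lt_goldenRatio]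

noncomputable def jqf (M i₀ : ℕ) (tf Kf : ℕ → ℕ) (r : ℕ) : ℕ :=
  ((r % M) + (M - i₀ % M)) % (Kf (tf r))

noncomputable def DNf (a M i₀ : ℕ) (tf Kf : ℕ → ℕ) (r : ℕ) : ℕ :=
  Int.toNat (((St a (tf r) (jqf M i₀ tf Kf r)).1 * (Nat.fib (i₀+1) : ℤ)
    + (St a (tf r) (jqf M i₀ tf Kf r)).2 * (Nat.fib i₀ : ℤ) + 1) / a)

noncomputable def zfun (a M : ℕ) (tf Kf : ℕ → ℕ) : ℕ → ℕ → ℕ := fun r j =>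
  if Nat.gcd a (Nat.fib (r % M + M)) = 1 then
    dg a (St a (tf r) ((j + Kf (tf r) - 1) % Kf (tf r)))
  else 0

noncomputable def wfun (a M i₀ : ℕ) (tf Kf : ℕ → ℕ) : ℕ → ℕ → ℕ := fun i n =>
  if Nat.gcd a (Nat.fib (n % M % M + M)) = 1 ∧
      i ∈ Nat.zeckendorf (DNf a M i₀ tf Kf (n % M)) then 1 else 0

lemma zfun_le_one (a M : ℕ) (tf Kf : ℕ → ℕ) (r j : ℕ) : zfun a M tf Kf r j ≤ 1 := by
  unfold zfun; split
  · exact dg_le_one a _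
  · omega

lemma wfun_le_one (a M i₀ : ℕ) (tf Kf : ℕ → ℕ) (i n : ℕ) : wfun a M i₀ tf Kf i n ≤ 1 := by
  unfold wfun; split <;> omega

lemma zfun_periodic (a M : ℕ) (tf Kf : ℕ → ℕ) (r : ℕ) (hK : 0 < Kf (tf r)) (j : ℕ) :
    zfun a M tf Kf r (j + Kf (tf r)) = zfun a M tf Kf r j := by
  unfold zfun
  have hidx : j + Kf (tf r) + Kf (tf r) - 1 = (j + Kf (tf r) - 1) + Kf (tf r) := by omega
  rw [hidx, Nat.add_mod_right]

lemma wfun_periodic (a M i₀ : ℕ) (tf Kf : ℕ → ℕ) (i n : ℕ) :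
    wfun a M i₀ tf Kf i (n + M) = wfun a M i₀ tf Kf i n := by
  unfold wfun
  rw [Nat.add_mod_right]

end S12

set_option maxRecDepth 8000 in
theorem stmt12 (a : ℕ) (ha : 3 ≤ a) :
    ∃ M n₀ i₀ : ℕ, 1 ≤ M ∧ 1 ≤ n₀ ∧ 1 ≤ i₀ ∧
      ∃ z w : ℕ → ℕ → ℕ,
        (∀ r j, z r j ≤ 1) ∧ (∀ i n, w i n ≤ 1) ∧
        (∀ r, ∃ p, 0 < p ∧ ∀ j, z r (j + p) = z r j) ∧
        (∀ i, ∃ p, 0 < p ∧ ∀ n, w i (n + p) = w i n) ∧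
        ∀ n, n₀ ≤ n → Nat.gcd a (Nat.fib n) = 1 →
          invMod a (Nat.fib n) =
            (∑ i ∈ Finset.Icc i₀ (n - 1), z (n % M) (n - i) * Nat.fib i) +
              ∑ i ∈ Finset.Icc 1 (i₀ - 1), w i n * Nat.fib i ∧
          -- the digits form a Zeckendorf representation: no two consecutive ones
          ∀ i, 1 ≤ i → i + 1 ≤ n - 1 →
            (if i < i₀ then w i n else z (n % M) (n - i)) *
              (if i + 1 < i₀ then w (i + 1) n else z (n % M) (n - (i + 1))) = 0 := by
  classical
  obtain ⟨P, hP0, hP⟩ := S12.exists_pisano a ha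
  -- cycle lengths
  have hcyc : ∀ t : ℕ, ∃ K, 0 < K ∧ (1 ≤ t → t < a → S12.St a t K = S12.St a t 0) := by
    intro t
    by_cases h : 1 ≤ t ∧ t < a
    · obtain ⟨K, hK0, hKe⟩ := S12.exists_cycle ha h.1 h.2
      exact ⟨K, hK0, fun _ _ => hKe⟩
    · exact ⟨1, one_pos, fun h1 h2 => absurd ⟨h1, h2⟩ h⟩
  choose Kf hKf0 hKfc using hcyc
  set X := ∏ t ∈ Finset.Icc 1 (a-1), Kf t with hXdef
  have hX0 : 0 < X := Finset.prod_pos (fun t _ => hKf0 t)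
  set M := P * X with hMdef
  have hM0 : 0 < M := Nat.mul_pos hP0 hX0
  have hKM : ∀ t, 1 ≤ t → t < a → Kf t ∣ M := by
    intro t h1 h2
    exact Dvd.dvd.mul_left
      (Finset.dvd_prod_of_mem Kf (by simp only [Finset.mem_Icc]; omega)) P
  -- reduction of fib indices mod M
  have hred : ∀ m : ℕ, Nat.fib m ≡ Nat.fib (m % M) [MOD a] := by
    intro m
    have h1 : m = m % M + (m / M * X) * P := by
      have h2 : m / M * X * P = m / M * M := by rw [hMdef]; ring
      have h3 := Nat.mod_add_div' m M
      omega
    calc Nat.fib m = Nat.fib (m % M + (m / M * X) * P) := by rw [← h1]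
    _ ≡ Nat.fib (m % M) [MOD a] := by
        exact S12.fib_congr_of_period hP (m / M * X) (m % M)
  have hgcd_red : ∀ m n : ℕ, m % M = n % M →
      Nat.gcd a (Nat.fib m) = Nat.gcd a (Nat.fib n) := by
    intro m n h
    have h1 := hred m
    have h2 := hred n
    rw [h] at h1
    have h3 : Nat.fib m % a = Nat.fib n % a := h1.trans h2.symm
    rw [Nat.gcd_rec a (Nat.fib m), Nat.gcd_rec a (Nat.fib n), h3]
  have hfib_congr : ∀ m n : ℕ, m % M = n % M → Nat.fib m ≡ Nat.fib n [MOD a] := by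
    intro m n h
    have h1 := hred m
    rw [h] at h1
    exact h1.trans (hred n).symm
  -- t selection
  have hts : ∀ r : ℕ, ∃ t, 1 ≤ t ∧ t < a ∧
      (Nat.gcd a (Nat.fib (r % M + M)) = 1 →
        (a:ℤ) ∣ ((t:ℤ) * (Nat.fib (r % M + M) : ℤ) + 1)) := by
    intro r
    by_cases h : Nat.gcd a (Nat.fib (r % M + M)) = 1
    · obtain ⟨t, h1, h2, h3⟩ := S12.exists_t ha h
      exact ⟨t, h1, h2, fun _ => h3⟩
    · exact ⟨1, le_refl 1, by omega, fun hc => absurd hc h⟩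
  choose tf htf1 htf2 htf3 using hts
  -- eventual bounds
  have hbnd : ∀ᶠ i in atTop, ∀ t ∈ Finset.Icc 1 (a-1), ∀ j ∈ Finset.range (Kf t),
      (0 < (S12.St a t j).1 * (Nat.fib (i+1) : ℤ) + (S12.St a t j).2 * (Nat.fib i : ℤ) + 1) ∧
      ((S12.St a t j).1 * (Nat.fib (i+1) : ℤ) + (S12.St a t j).2 * (Nat.fib i : ℤ) + 1
        < (a:ℤ) * (Nat.fib i : ℤ)) ∧
      (S12.xi (S12.St a t j) < (a:ℝ) * (φ - 1) →
        (S12.St a t j).1 * (Nat.fib (i+1) : ℤ) + (S12.St a t j).2 * (Nat.fib i : ℤ) + 1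
          < (a:ℤ) * (Nat.fib (i-1) : ℤ)) := by
    rw [Filter.eventually_all_finset]
    intro t ht
    rw [Filter.eventually_all_finset]
    intro j _
    simp only [Finset.mem_Icc] at ht
    have ht1 : 1 ≤ t := ht.1
    have ht2 : t < a := by omega
    obtain ⟨⟨hx0, hxa⟩, _, _⟩ := S12.invariant ha ht1 ht2 j
    have hxieq : S12.xi (S12.St a t j)
        = ((S12.St a t j).1 : ℝ) * φ + ((S12.St a t j).2 : ℝ) := rfl
    have e1 := S12.ev_pos (S12.St a t j).1 (S12.St a t j).2 (by rw [← hxieq]; exact hx0)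
    have e2 := S12.ev_lt (S12.St a t j).1 (S12.St a t j).2 a (by rw [← hxieq]; exact hxa)
    have e3 : ∀ᶠ i in atTop, (S12.xi (S12.St a t j) < (a:ℝ) * (φ - 1) →
        (S12.St a t j).1 * (Nat.fib (i+1) : ℤ) + (S12.St a t j).2 * (Nat.fib i : ℤ) + 1
          < (a:ℤ) * (Nat.fib (i-1) : ℤ)) := by
      by_cases hc : S12.xi (S12.St a t j) < (a:ℝ) * (φ - 1)
      · have hφxi : φ * (((S12.St a t j).1 : ℝ) * φ + ((S12.St a t j).2 : ℝ)) < a := by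
          rw [← hxieq]
          have hg : φ^2 = φ + 1 := goldenRatio_sq
          nlinarith [one_lt_goldenRatio, hx0]
        exact (S12.ev_shift _ _ a hφxi).mono (fun i hi _ => hi)
      · exact Filter.Eventually.of_forall (fun i hcon => absurd hcon hc)
    exact (e1.and (e2.and e3)).mono (fun i h => ⟨h.1, h.2.1, h.2.2⟩)
  obtain ⟨i₁, hI⟩ := Filter.eventually_atTop.mp hbnd
  set i₀ := max i₁ 5 with hi₀def
  have hi₀5 : 5 ≤ i₀ := le_max_right _ _
  have hIi₀ := hI i₀ (le_max_left _ _)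
  -- the functions
  set jq := S12.jqf M i₀ tf Kf with hjqdef
  set DN := S12.DNf a M i₀ tf Kf with hDNdef
  set zf := S12.zfun a M tf Kf with hzfdef
  set wf := S12.wfun a M i₀ tf Kf with hwfdef
  refine ⟨M, M + i₀ + 5, i₀, by omega, by omega, by omega, zf, wf,
    fun r j => S12.zfun_le_one a M tf Kf r j,
    fun i n => S12.wfun_le_one a M i₀ tf Kf i n,
    fun r => ⟨Kf (tf r), hKf0 _, fun j => S12.zfun_periodic a M tf Kf r (hKf0 _) j⟩,
    fun i => ⟨M, hM0, fun n => S12.wfun_periodic a M i₀ tf Kf i n⟩, ?_⟩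
  -- main statement
  intro n hn hgcd
  set r := n % M with hrdef
  have hrM : r < M := Nat.mod_lt _ hM0
  have hrr : r % M = r := Nat.mod_eq_of_lt hrM
  have hni₀ : i₀ + 1 ≤ n := by omega
  have hmm1 : (r % M + M) % M = n % M := by
    rw [Nat.add_mod_right, Nat.mod_mod_of_dvd _ dvd_rfl, hrr]
  have hcondr : Nat.gcd a (Nat.fib (r % M + M)) = 1 := by
    rw [hgcd_red (r % M + M) n hmm1]
    exact hgcd
  set t := tf r with htdef
  have ht1 : 1 ≤ t := htf1 r
  have ht2 : t < a := htf2 r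
  have hdvd : (a:ℤ) ∣ ((t:ℤ) * (Nat.fib (r % M + M) : ℤ) + 1) := htf3 r hcondr
  set K := Kf t with hKdef
  have hK0 : 0 < K := hKf0 t
  have hKst : S12.St a t K = S12.St a t 0 := hKfc t ht1 ht2
  have hfib2 : 2 ≤ Nat.fib n := by
    calc 2 = Nat.fib 3 := rfl
    _ ≤ Nat.fib n := Nat.fib_mono (by omega)
  -- transfer divisibility to fib n
  have hdvdn : (a:ℤ) ∣ ((t:ℤ) * (Nat.fib n : ℤ) + 1) := by
    have hcong : Nat.fib (r % M + M) ≡ Nat.fib n [MOD a] :=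
      hfib_congr _ _ hmm1
    have hd2 : (a:ℤ) ∣ ((Nat.fib n : ℤ) - (Nat.fib (r % M + M) : ℤ)) := hcong.dvd
    have heq : ((t:ℤ) * (Nat.fib n : ℤ) + 1)
        = ((t:ℤ) * (Nat.fib (r % M + M) : ℤ) + 1)
          + (t:ℤ) * ((Nat.fib n : ℤ) - (Nat.fib (r % M + M) : ℤ)) := by ring
    rw [heq]
    exact dvd_add hdvd (Dvd.dvd.mul_left hd2 _)
  have hdvdN : a ∣ t * Nat.fib n + 1 := by
    have : (a:ℤ) ∣ ((t * Nat.fib n + 1 : ℕ) : ℤ) := by push_cast; exact hdvdn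
    exact_mod_cast this
  set xn := (t * Nat.fib n + 1) / a with hxndef
  have haxn : a * xn = t * Nat.fib n + 1 := Nat.mul_div_cancel' hdvdN
  have hxn_pos : 0 < xn := by
    rcases Nat.eq_zero_or_pos xn with h0 | h0
    · rw [h0, Nat.mul_zero] at haxn; omega
    · exact h0
  have hxn_lt : xn < Nat.fib n := by
    have h1 : a * xn < a * Nat.fib n := by nlinarith
    exact lt_of_mul_lt_mul_left h1 (Nat.zero_le a)
  have hmod1 : a * xn % Nat.fib n = 1 % Nat.fib n := by
    rw [haxn, mul_comm t, Nat.mul_add_mod]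
  have hinv : invMod a (Nat.fib n) = xn :=
    S12.invMod_eq (by omega) hgcd hmod1 hxn_pos hxn_lt
  -- telescoping
  set J := n - i₀ with hJdef
  have hJn : J ≤ n := by omega
  have hJ1 : 1 ≤ J := by omega
  have htele := S12.telescope a t n J hJn
  have hnJ : n - J = i₀ := by omega
  have hnJ1 : n - J + 1 = i₀ + 1 := by omega
  rw [hnJ1, hnJ] at htele
  -- state at J equals state at jq r
  have hJK : J % K = jq r := by
    have hmodeq : ((r % M) + (M - i₀ % M)) ≡ J [MOD K] := by
      rw [Nat.modEq_iff_dvd]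
      have hc1 : (J:ℤ) = (n:ℤ) - (i₀:ℤ) := by
        have : (J:ℕ) = n - i₀ := rfl
        omega
      have hc2 : ((M - i₀ % M : ℕ) : ℤ) = (M:ℤ) - ((i₀ % M : ℕ) : ℤ) := by
        have : i₀ % M < M := Nat.mod_lt _ hM0
        omega
      have hc3 : (n:ℤ) = (r:ℤ) + (M:ℤ) * ((n / M : ℕ) : ℤ) := by
        exact_mod_cast (Nat.mod_add_div n M).symm
      have hc4 : (i₀:ℤ) = ((i₀ % M : ℕ) : ℤ) + (M:ℤ) * ((i₀ / M : ℕ) : ℤ) := by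
        exact_mod_cast (Nat.mod_add_div i₀ M).symm
      have hKMdvd : (K:ℤ) ∣ (M:ℤ) := Int.natCast_dvd_natCast.mpr (hKM t ht1 ht2)
      obtain ⟨c, hc⟩ := hKMdvd
      have hcast : (↑(r % M + (M - i₀ % M)) : ℤ) = (r:ℤ) + (M:ℤ) - ((i₀ % M : ℕ) : ℤ) := by
        rw [hrr]
        have h5 : i₀ % M ≤ M := le_of_lt (Nat.mod_lt _ hM0)
        omega
      refine ⟨c * (-1 + ((n / M : ℕ) : ℤ) - ((i₀ / M : ℕ) : ℤ)), ?_⟩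
      rw [hcast, hc1]
      linear_combination hc3 - hc4
        + (-1 + ((n / M : ℕ) : ℤ) - ((i₀ / M : ℕ) : ℤ)) * hc
    have hthis := hmodeq.symm
    unfold Nat.ModEq at hthis
    rw [hthis, hjqdef]
    unfold S12.jqf
    rw [← htdef, ← hKdef]
  have hjqK : jq r < K := by
    rw [hjqdef]
    unfold S12.jqf
    rw [← htdef, ← hKdef]
    exact Nat.mod_lt _ hK0
  have hstJ : S12.St a t J = S12.St a t (jq r) := by
    rw [S12.st_mod hK0 hKst J, hJK]
  -- the integer D
  set Dz : ℤ := (S12.St a t (jq r)).1 * (Nat.fib (i₀+1) : ℤ)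
    + (S12.St a t (jq r)).2 * (Nat.fib i₀ : ℤ) + 1 with hDzdef
  set Ssum : ℤ := ∑ j ∈ Finset.Icc 1 J, (S12.tag a t j : ℤ) * (Nat.fib (n - j) : ℤ)
    with hSsumdef
  have hDz : (a:ℤ) * ((xn:ℤ) - Ssum) = Dz := by
    have haxnZ : (a:ℤ) * (xn:ℤ) = (t:ℤ) * (Nat.fib n : ℤ) + 1 := by
      exact_mod_cast congrArg (Nat.cast : ℕ → ℤ) haxn
    rw [mul_sub, hSsumdef, htele, hstJ, hDzdef, haxnZ]
    ring
  -- bounds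
  obtain ⟨hB1, hB2, hB3⟩ := hIi₀ t (by simp only [Finset.mem_Icc]; omega)
    (jq r) (Finset.mem_range.mpr hjqK)
  have hXpos : 0 < (xn:ℤ) - Ssum := by
    by_contra hcon
    push_neg at hcon
    have : (a:ℤ) * ((xn:ℤ) - Ssum) ≤ 0 :=
      mul_nonpos_of_nonneg_of_nonpos (by positivity) hcon
    rw [hDz] at this
    exact absurd hB1 (not_lt.mpr this)
  have hXlt : (xn:ℤ) - Ssum < (Nat.fib i₀ : ℤ) := by
    have h1 : (a:ℤ) * ((xn:ℤ) - Ssum) < (a:ℤ) * (Nat.fib i₀ : ℤ) := by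
      rw [hDz]; exact hB2
    exact lt_of_mul_lt_mul_left h1 (by positivity)
  have hDNr : (DN r : ℤ) = (xn:ℤ) - Ssum := by
    rw [hDNdef]
    unfold S12.DNf
    rw [← hjqdef, ← htdef, ← hDzdef, ← hDz,
      Int.mul_ediv_cancel_left _ (by exact_mod_cast (by omega : a ≠ 0))]
    exact Int.toNat_of_nonneg (le_of_lt hXpos)
  -- digit identification
  have hztag : ∀ j, 1 ≤ j → zf r j = S12.tag a t j := by
    intro j hj
    rw [hzfdef]
    unfold S12.zfun
    rw [if_pos hcondr]
    obtain ⟨j', rfl⟩ : ∃ j', j = j' + 1 := ⟨j - 1, by omega⟩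
    have hidx : j' + 1 + K - 1 = j' + K := by omega
    rw [← htdef, ← hKdef, hidx]
    have : (j' + K) % K = j' % K := Nat.add_mod_right j' K
    rw [this]
    show S12.dg a (S12.St a t (j' % K)) = S12.tag a t (j' + 1)
    rw [← S12.st_mod hK0 hKst j']
    rfl
  -- sum reindexing
  have hsum_z : ∑ i ∈ Finset.Icc i₀ (n - 1), zf r (n - i) * Nat.fib i
      = ∑ j ∈ Finset.Icc 1 J, S12.tag a t j * Nat.fib (n - j) := by
    refine Finset.sum_nbij' (fun i => n - i) (fun j => n - j) ?_ ?_ ?_ ?_ ?_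
    · intro i hi
      simp only [Finset.mem_Icc] at hi ⊢
      omega
    · intro j hj
      simp only [Finset.mem_Icc] at hj ⊢
      omega
    · intro i hi
      simp only [Finset.mem_Icc] at hi
      show n - (n - i) = i
      omega
    · intro j hj
      simp only [Finset.mem_Icc] at hj
      show n - (n - j) = j
      omega
    · intro i hi
      simp only [Finset.mem_Icc] at hi
      show zf r (n - i) * Nat.fib i = S12.tag a t (n - i) * Nat.fib (n - (n - i))
      rw [hztag (n - i) (by omega), (by omega : n - (n - i) = i)]
  -- w digits as indicator
  have hDNlt : DN r < Nat.fib i₀ := by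
    have h1 := hDNr ▸ hXlt
    exact_mod_cast h1
  have heqw : ∀ i : ℕ, wf i n = if i ∈ Nat.zeckendorf (DN r) then 1 else 0 := by
    intro i
    rw [hwfdef]
    unfold S12.wfun
    rw [← hDNdef, ← hrdef]
    have hT : (Nat.gcd a (Nat.fib (r % M + M)) = 1) = True := eq_true hcondr
    simp only [hT, true_and]
  have hsum_w : ∑ i ∈ Finset.Icc 1 (i₀ - 1), wf i n * Nat.fib i = DN r := by
    simp only [heqw]
    exact S12.zeck_sum_indicator (by omega) hDNlt
  constructor
  · -- the equation
    rw [hsum_z, hsum_w, hinv]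
    have hScast : Ssum = ((∑ j ∈ Finset.Icc 1 J, S12.tag a t j * Nat.fib (n - j) : ℕ) : ℤ) := by
      rw [hSsumdef]
      push_cast
      rfl
    have hfin : (xn:ℤ) = ((∑ j ∈ Finset.Icc 1 J, S12.tag a t j * Nat.fib (n - j) : ℕ) : ℤ)
        + (DN r : ℤ) := by
      rw [← hScast, hDNr]
      ring
    exact_mod_cast hfin
  · -- no two consecutive ones
    intro i hi1 hi2
    by_cases hc1 : i + 1 < i₀
    · have hc2 : i < i₀ := by omega
      rw [if_pos hc2, if_pos hc1]
      by_cases hm1 : i ∈ Nat.zeckendorf (DN r)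
      · by_cases hm2 : i + 1 ∈ Nat.zeckendorf (DN r)
        · exact absurd (S12.zeck_no_consec hm1 hm2) (fun h => h)
        · rw [heqw (i+1), if_neg hm2, Nat.mul_zero]
      · rw [heqw i, if_neg hm1, Nat.zero_mul]
    · by_cases hc2 : i < i₀
      · have hi1eq : i + 1 = i₀ := by omega
        rw [if_pos hc2, if_neg (by omega)]
        have hzJ : zf (n % M) (n - (i+1)) = S12.tag a t J := by
          rw [← hrdef, hi1eq, ← hJdef]
          exact hztag J hJ1
        rcases Nat.le_one_iff_eq_zero_or_eq_one.mp (S12.tag_le_one a t J) with htg | htg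
        · rw [hzJ, htg, Nat.mul_zero]
        · have hxiJ : S12.xi (S12.St a t J) < (a:ℝ) * (φ - 1) :=
            ((S12.invariant ha ht1 ht2 J).2.2 htg).2.2
          have hxiJ' : S12.xi (S12.St a t (jq r)) < (a:ℝ) * (φ - 1) := by
            rw [← hstJ]; exact hxiJ
          have hB3' := hB3 hxiJ'
          have hXlt2 : (xn:ℤ) - Ssum < (Nat.fib (i₀ - 1) : ℤ) :=
            lt_of_mul_lt_mul_left (by rw [hDz]; exact hB3') (by positivity)
          have hDNlt2 : DN r < Nat.fib (i₀ - 1) := by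
            have h1 := hDNr ▸ hXlt2
            exact_mod_cast h1
          have hnot : i ∉ Nat.zeckendorf (DN r) := by
            intro hmem
            have := S12.zeck_lt_of_lt_fib (by omega : 2 ≤ i₀ - 1) hDNlt2 hmem
            omega
          rw [heqw i, if_neg hnot, Nat.zero_mul]
      · rw [if_neg (by omega), if_neg (by omega)]
        have hj'1 : 1 ≤ n - (i+1) := by omega
        have hj'i : n - i = (n - (i+1)) + 1 := by omega
        rw [hj'i, hztag ((n - (i+1)) + 1) (by omega), hztag (n - (i+1)) hj'1]
        rcases Nat.le_one_iff_eq_zero_or_eq_one.mp (S12.tag_le_one a t (n - (i+1)))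
          with htg | htg
        · rw [htg, Nat.mul_zero]
        · rw [S12.tag_no11 ha ht1 ht2 _ htg, Nat.zero_mul]
end

section
/- For every integer n ≥ 8 with n ≡ 2 (mod 3), we have (2^{-1} mod F_n) = ∑_{k=0}^{(n-8)/3} F_{n-3k-2} + F_4. -/
lemma key14 (m : ℕ) :
    2 * ((∑ k ∈ Finset.range (m + 1), Nat.fib (3 * m + 8 - 3 * k - 2)) + Nat.fib 4) =
      Nat.fib (3 * m + 8) + 1 := by
  induction m with
  | zero => decide
  | succ m ih =>
    have hsum : (∑ k ∈ Finset.range (m + 2), Nat.fib (3 * (m + 1) + 8 - 3 * k - 2)) =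
        (∑ k ∈ Finset.range (m + 1), Nat.fib (3 * m + 8 - 3 * k - 2)) + Nat.fib (3 * m + 9) := by
      rw [Finset.sum_range_succ' (fun k => Nat.fib (3 * (m + 1) + 8 - 3 * k - 2)) (m + 1)]
      congr 1
      apply Finset.sum_congr rfl
      intro k _
      congr 1
      omega
    have h1 : Nat.fib (3 * m + 10) = Nat.fib (3 * m + 9) + Nat.fib (3 * m + 8) := by
      rw [show 3 * m + 10 = (3 * m + 8) + 2 by ring, Nat.fib_add_two]; ring
    have h2 : Nat.fib (3 * m + 11) = Nat.fib (3 * m + 10) + Nat.fib (3 * m + 9) := by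
      rw [show 3 * m + 11 = (3 * m + 9) + 2 by ring, Nat.fib_add_two]; ring
    have : 3 * (m + 1) + 8 = 3 * m + 11 := by ring
    rw [hsum, this]
    omega

theorem stmt14 (n : ℕ) (hn : 8 ≤ n) (h3 : n % 3 = 2) :
    invMod 2 (Nat.fib n) =
      (∑ k ∈ Finset.range ((n - 8) / 3 + 1), Nat.fib (n - 3 * k - 2)) +
        Nat.fib 4 := by
  set m := (n - 8) / 3 with hm
  have hn' : n = 3 * m + 8 := by omega
  set b := (∑ k ∈ Finset.range (m + 1), Nat.fib (n - 3 * k - 2)) + Nat.fib 4 with hb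
  have h2b : 2 * b = Nat.fib n + 1 := by
    rw [hb, hn']; exact key14 m
  have hfib : 21 ≤ Nat.fib n := by
    calc 21 = Nat.fib 8 := by decide
    _ ≤ Nat.fib n := Nat.fib_mono hn
  have hmem : b ∈ {c | 0 < c ∧ 2 * c % Nat.fib n = 1 % Nat.fib n} := by
    constructor
    · omega
    · rw [show 2 * b = Nat.fib n + 1 from h2b, Nat.add_mod_left]
  have : invMod 2 (Nat.fib n) = b := by
    unfold invMod
    apply le_antisymm
    · exact Nat.sInf_le hmem
    · apply le_csInf ⟨b, hmem⟩
      rintro c ⟨hc0, hc⟩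
      have h1 : 1 % Nat.fib n = 1 := Nat.mod_eq_of_lt (by omega)
      rw [h1] at hc
      have hdm := Nat.div_add_mod (2 * c) (Nat.fib n)
      rw [hc] at hdm
      rcases Nat.eq_zero_or_pos (2 * c / Nat.fib n) with hq | hq
      · rw [hq] at hdm; omega
      · have : Nat.fib n ≤ Nat.fib n * (2 * c / Nat.fib n) :=
          Nat.le_mul_of_pos_right _ hq
        omega
  rw [this]
end

section
/- For every x ∈ [0,1), defining δ_i(x) = ⌊T^{(i)}(x)⌋ where T(x) = φx mod 1, the sequence (δ_i(x)) takes values in {0,1}, satisfies δ_i(x)·δ_{i+1}(x) = 0 for all i, and x = ∑_{i=1}^∞ δ_i(x)·φ^{-i}. -/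
open Real goldenRatio

lemma phiMap_mem (y : ℝ) : phiMap y ∈ Set.Ico (0 : ℝ) 1 :=
  ⟨Int.fract_nonneg _, Int.fract_lt_one _⟩

lemma iter_mem (x : ℝ) (hx : x ∈ Set.Ico (0 : ℝ) 1) (n : ℕ) :
    phiMap^[n] x ∈ Set.Ico (0 : ℝ) 1 := by
  induction n with
  | zero => simpa using hx
  | succ n ih => rw [Function.iterate_succ_apply']; exact phiMap_mem _

lemma floor_01 (y : ℝ) (hy : y ∈ Set.Ico (0 : ℝ) 1) :
    ⌊goldenRatio * y⌋ = 0 ∨ ⌊goldenRatio * y⌋ = 1 := by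
  have h0 : (0 : ℝ) ≤ goldenRatio * y := mul_nonneg goldenRatio_pos.le hy.1
  have h2 : goldenRatio * y < 2 :=
    lt_of_le_of_lt (mul_le_of_le_one_right goldenRatio_pos.le hy.2.le) goldenRatio_lt_two
  have l0 : (0 : ℤ) ≤ ⌊goldenRatio * y⌋ := Int.floor_nonneg.2 h0
  have l2 : ⌊goldenRatio * y⌋ < 2 := by
    have := Int.floor_le (goldenRatio * y)
    exact_mod_cast lt_of_le_of_lt this h2
  omega

lemma key_s19 (y : ℝ) : goldenRatio * y = ⌊goldenRatio * y⌋ + phiMap y := by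
  rw [phiMap]; exact (Int.floor_add_fract _).symm

lemma consec (y : ℝ) (hy : y ∈ Set.Ico (0 : ℝ) 1) (h1 : ⌊goldenRatio * y⌋ = 1) :
    ⌊goldenRatio * (phiMap y)⌋ = 0 := by
  have hT : phiMap y = goldenRatio * y - 1 := by
    have := key_s19 y; rw [h1] at this; push_cast at this; linarith
  have hlt : goldenRatio * phiMap y < 1 := by
    have h2 : goldenRatio * y < goldenRatio := by
      have := mul_lt_mul_of_pos_left hy.2 goldenRatio_pos
      simpa using this
    have : goldenRatio * phiMap y < goldenRatio * (goldenRatio - 1) := by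
      rw [hT]; nlinarith [goldenRatio_pos]
    have hsq : goldenRatio * (goldenRatio - 1) = 1 := by
      have := goldenRatio_sq; nlinarith
    linarith
  have hge : (0 : ℝ) ≤ goldenRatio * phiMap y :=
    mul_nonneg goldenRatio_pos.le (phiMap_mem y).1
  rw [Int.floor_eq_zero_iff]; exact ⟨hge, hlt⟩

theorem stmt19 (x : ℝ) (hx : x ∈ Set.Ico (0 : ℝ) 1) :
    (∀ i, 1 ≤ i → phiDigit x i = 0 ∨ phiDigit x i = 1) ∧
    (∀ i, 1 ≤ i → phiDigit x i * phiDigit x (i + 1) = 0) ∧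
    x = ∑' i : ℕ, (phiDigit x (i + 1) : ℝ) * φ⁻¹ ^ (i + 1) := by
  have hmem := iter_mem x hx
  have hd01 : ∀ i, 1 ≤ i → phiDigit x i = 0 ∨ phiDigit x i = 1 := fun i _ =>
    floor_01 _ (hmem (i - 1))
  refine ⟨hd01, ?_, ?_⟩
  · intro i hi
    rcases hd01 i hi with h | h
    · rw [h, zero_mul]
    · have : phiDigit x (i + 1) = 0 := by
        have hi1 : i + 1 - 1 = i := by omega
        have hi2 : i = (i - 1) + 1 := by omega
        rw [phiDigit, hi1, hi2, Function.iterate_succ_apply']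
        exact consec _ (hmem (i - 1)) h
      rw [this, mul_zero]
  · -- series
    set f : ℕ → ℝ := fun i => (phiDigit x (i + 1) : ℝ) * φ⁻¹ ^ (i + 1) with hf
    have hinv0 : (0 : ℝ) ≤ φ⁻¹ := inv_nonneg.2 goldenRatio_pos.le
    have hinv1 : φ⁻¹ < 1 := inv_lt_one_of_one_lt₀ one_lt_goldenRatio
    have hfnonneg : ∀ i, 0 ≤ f i := by
      intro i
      rcases hd01 (i + 1) (by omega) with h | h <;>
        · rw [hf]; simp only [h]; positivity
    have hfle : ∀ i, f i ≤ φ⁻¹ ^ (i + 1) := by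
      intro i
      rcases hd01 (i + 1) (by omega) with h | h <;> rw [hf] <;> simp [h] <;> positivity
    have hsum : Summable f := by
      apply Summable.of_nonneg_of_le hfnonneg hfle
      exact (summable_geometric_of_lt_one hinv0 hinv1).comp_injective (add_left_injective 1)
        |>.congr (fun i => rfl)
    -- partial sum identity
    have hdig : ∀ n : ℕ, phiDigit x (n + 1) = ⌊goldenRatio * (phiMap^[n] x)⌋ := by
      intro n; rw [phiDigit]; norm_num
    have hpartial : ∀ n : ℕ,
        x = (∑ i ∈ Finset.range n, f i) + (phiMap^[n] x) * φ⁻¹ ^ n := by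
      intro n
      induction n with
      | zero => simp
      | succ n ih =>
        have hk := key_s19 (phiMap^[n] x)
        have hinv : φ⁻¹ = φ - 1 := by
          refine inv_eq_of_mul_eq_one_right ?_
          have := goldenRatio_sq; nlinarith
        have hstep : phiMap^[n] x = (phiDigit x (n + 1) : ℝ) * φ⁻¹ + (phiMap^[n + 1] x) * φ⁻¹ := by
          rw [hdig n, Function.iterate_succ_apply', hinv]
          linear_combination (φ - 1) * hk - (phiMap^[n] x) * goldenRatio_sq
        have e : phiMap^[n] x * φ⁻¹ ^ n = f n + phiMap^[n + 1] x * φ⁻¹ ^ (n + 1) := by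
          rw [hstep, hf, pow_succ]; ring
        rw [Finset.sum_range_succ]
        linarith [ih, e]
    have htend : Filter.Tendsto (fun n => ∑ i ∈ Finset.range n, f i)
        Filter.atTop (nhds x) := by
      have h0 : Filter.Tendsto (fun n : ℕ => (phiMap^[n] x) * φ⁻¹ ^ n)
          Filter.atTop (nhds 0) := by
        apply squeeze_zero (fun n => mul_nonneg (hmem n).1 (by positivity))
          (fun n => ?_) (tendsto_pow_atTop_nhds_zero_of_lt_one hinv0 hinv1)
        exact mul_le_of_le_one_left (by positivity) (hmem n).2.le
      have := Filter.Tendsto.sub (tendsto_const_nhds (x := x)) h0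
      simp only [sub_zero] at this
      refine this.congr fun n => ?_
      have := hpartial n
      linarith
    exact (tendsto_nhds_unique hsum.hasSum.tendsto_sum_nat htend).symm
end
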